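/- arXiv:2306.17352 — 5 statements merged into one kernel-verified Lean document; each statement's English description precedes it below -/
import Mathlib

section
/- Let b ∈ V^{⊗(m−1)} be a maximal vector of weight i_b. Then: (a) Φ₁(b) = b ⊗ y₁ satisfies E Φ₁(b) = 0 and is a weight vector of weight i_b + 1; (b) if i_b > 0 then Φ₂(b) = [i_b] b ⊗ y₋₁ − v^{i_b} (F b) ⊗ y₁ satisfies E Φ₂(b) = 0, lies in the span of the basis vectors y_i with i₁+⋯+i_m = i_b − 1, and is nonzero whenever [i_b] ≠ 0 in k. -/
noncomputable section
attribute [local instance] Classical.propDecidable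

/-- Balanced quantum integer `[m]` for a natural number `m`. -/
def qintN {k : Type*} [Field k] (v : k) (m : ℕ) : k :=
  ∑ t ∈ Finset.range m, v ^ ((m : ℤ) - 1 - 2 * t)

/-- Balanced quantum integer `[m]` for an integer `m`. -/
def qint {k : Type*} [Field k] (v : k) (m : ℤ) : k :=
  if 0 ≤ m then qintN v m.toNat else - qintN v (-m).toNat

/-- Quantum factorial `[m]! = [1][2]⋯[m]`. -/
def qfact {k : Type*} [Field k] (v : k) (m : ℕ) : k :=
  ∏ j ∈ Finset.range m, qintN v (j + 1)

/-- The `n`-th tensor power of `V = k²`, realized as coordinate functions with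
respect to the basis `y_i`, `i ∈ {1,-1}ⁿ` (here `true ↔ 1`, `false ↔ -1`). -/
abbrev Tn (k : Type*) [Field k] (n : ℕ) := (Fin n → Bool) → k

/-- The sign of an index entry: `true ↦ 1`, `false ↦ -1`. -/
def sgn (b : Bool) : ℤ := if b then 1 else -1

/-- The weight `i₁ + ⋯ + i_n` of a basis index. -/
def wt {n : ℕ} (i : Fin n → Bool) : ℤ := ∑ t, sgn (i t)

variable {k : Type*} [Field k]

/-- The operator `E` on `V^{⊗n}`. -/
def Eop (v : k) (n : ℕ) : Tn k n →ₗ[k] Tn k n where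
  toFun f := fun i =>
    ∑ j ∈ Finset.univ.filter (fun j => i j = true),
      v ^ (∑ t ∈ Finset.univ.filter (fun t => t < j), sgn (i t)) * f (Function.update i j false)
  map_add' f g := by
    funext i
    simp [Pi.add_apply, mul_add, Finset.sum_add_distrib]
  map_smul' c f := by
    funext i
    simp only [Pi.smul_apply, smul_eq_mul, RingHom.id_apply]
    rw [Finset.mul_sum]
    exact Finset.sum_congr rfl fun j _ => by ring

/-- The operator `F` on `V^{⊗n}`. -/
def Fop (v : k) (n : ℕ) : Tn k n →ₗ[k] Tn k n where
  toFun f := fun i =>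
    ∑ j ∈ Finset.univ.filter (fun j => i j = false),
      v ^ (-(∑ t ∈ Finset.univ.filter (fun t => j < t), sgn (i t))) * f (Function.update i j true)
  map_add' f g := by
    funext i
    simp [Pi.add_apply, mul_add, Finset.sum_add_distrib]
  map_smul' c f := by
    funext i
    simp only [Pi.smul_apply, smul_eq_mul, RingHom.id_apply]
    rw [Finset.mul_sum]
    exact Finset.sum_congr rfl fun j _ => by ring

/-- The operator `K` on `V^{⊗n}`. -/
def Kop (v : k) (n : ℕ) : Tn k n →ₗ[k] Tn k n where
  toFun f := fun i => v ^ (wt i) * f i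
  map_add' f g := by
    funext i
    simp [Pi.add_apply, mul_add]
  map_smul' c f := by
    funext i
    simp only [Pi.smul_apply, smul_eq_mul, RingHom.id_apply]
    ring

/-- The symmetric bilinear form on `V^{⊗n}` making the `y_i` orthonormal. -/
def form {n : ℕ} (f g : Tn k n) : k := ∑ i, f i * g i

/-- Tensoring on the right with the basis vector `y₁` (if `b = true`) or `y₋₁`
(if `b = false`). -/
def tensY {n : ℕ} (b : Bool) (f : Tn k n) : Tn k (n + 1) :=
  fun i => if i (Fin.last n) = b then f (fun t => i t.castSucc) else 0

/-- `Φ₁(b) = b ⊗ y₁`. -/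
def Phi1 {n : ℕ} (f : Tn k n) : Tn k (n + 1) := tensY true f

/-- `Φ₂(b) = [w] b ⊗ y₋₁ − v^w (F b) ⊗ y₁`, where `w` is the weight of `b`. -/
def Phi2 (v : k) {n : ℕ} (w : ℤ) (f : Tn k n) : Tn k (n + 1) :=
  qint v w • tensY false f - v ^ w • tensY true (Fop v n f)

/-- A `1`-factor: all partial sums are nonnegative. -/
def IsOneFactor {n : ℕ} (α : Fin n → Bool) : Prop :=
  ∀ j : Fin n, 0 ≤ ∑ t ∈ Finset.univ.filter (fun t => t ≤ j), sgn (α t)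

/-- The orthogonal maximal vectors `Ω(α)`, defined recursively. -/
def Omega (v : k) : (n : ℕ) → (Fin n → Bool) → Tn k n
  | 0, _ => fun _ => 1
  | n + 1, α =>
      if α (Fin.last n) = true then Phi1 (Omega v n fun t => α t.castSucc)
      else Phi2 v (wt fun t => α t.castSucc) (Omega v n fun t => α t.castSucc)

/-- Exchanging the entries of an index at two positions. -/
def swapPair {n : ℕ} (a b : Fin n) (i : Fin n → Bool) : Fin n → Bool :=
  fun t => if t = a then i b else if t = b then i a else i t

/-- The Temperley--Lieb operator `ė` acting on tensor positions `a` and `b`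
(intended: `b = a + 1`). -/
def eop (v : k) {n : ℕ} (a b : Fin n) : Tn k n →ₗ[k] Tn k n where
  toFun f := fun i =>
    if i a = true ∧ i b = false then -v⁻¹ * f i + f (swapPair a b i)
    else if i a = false ∧ i b = true then f (swapPair a b i) - v * f i
    else 0
  map_add' f g := by
    funext i
    simp only [Pi.add_apply]
    split_ifs <;> ring
  map_smul' c f := by
    funext i
    simp only [Pi.smul_apply, smul_eq_mul, RingHom.id_apply]
    split_ifs <;> ring

/-- The partial sum `α₁ + ⋯ + α_{q-1}` of the entries before position `q`. -/
def prefSum {n : ℕ} (α : Fin n → Bool) (q : Fin n) : ℤ :=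
  ∑ t ∈ Finset.univ.filter (fun t => t < q), sgn (α t)

/-- `(i, j)` is a pair of `α`: `α_i = 1` and `j` is the least index `> i` with
`α_i + ⋯ + α_j = 0`. -/
def PairedAt {n : ℕ} (α : Fin n → Bool) (i j : Fin n) : Prop :=
  α i = true ∧ i < j ∧ (∑ t ∈ Finset.Icc i j, sgn (α t)) = 0 ∧
    ∀ j' : Fin n, i < j' → j' < j → (∑ t ∈ Finset.Icc i j', sgn (α t)) ≠ 0

/-- An index is a defect if it belongs to no pair. -/
def IsDefect {n : ℕ} (α : Fin n → Bool) (i : Fin n) : Prop :=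
  (∀ j, ¬ PairedAt α i j) ∧ (∀ j, ¬ PairedAt α j i)

/-- `γ ∈ S(α)`: `γ` is obtained from `α` by negating both entries of each pair
in some subset of the pairs of `α`. -/
def InS {n : ℕ} (α γ : Fin n → Bool) : Prop :=
  (∀ i, IsDefect α i → γ i = α i) ∧
  (∀ i j, PairedAt α i j → (γ i = α i ∧ γ j = α j) ∨ (γ i = !α i ∧ γ j = !α j))

/-- `σ(α, γ)`: the number of pairs of `α` negated to obtain `γ`. -/
def sigmaCount {n : ℕ} (α γ : Fin n → Bool) : ℕ :=
  Nat.card {p : Fin n × Fin n // PairedAt α p.1 p.2 ∧ γ p.1 ≠ α p.1}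

/-- The natural (cellular) vectors `N(α) = Σ_{γ ∈ S(α)} (−v)^{σ(α,γ)} y_γ`,
written in coordinates. -/
def Nvec (v : k) (n : ℕ) (α : Fin n → Bool) : Tn k n :=
  fun γ => if InS α γ then (-v) ^ (sigmaCount α γ) else 0

/-- `β^{(j)}` (0-indexed `j`): change the entry of `β` at the position of its
`(j+1)`-st defect (0-indexed: defect number `j`) to `−1`. -/
def linkDefect {m : ℕ} (β : Fin m → Bool) (j : ℕ) : Fin m → Bool :=
  match (Finset.sort (Finset.univ.filter (fun i => IsDefect β i)) (· ≤ ·))[j]? with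
  | some q => Function.update β q false
  | none => β


section aux
variable {k : Type*} [Field k]

lemma zpow_eq_mul (v : k) (hv : v ≠ 0) (a b c : ℤ) (h : a = b + c) :
    v ^ a = v ^ b * v ^ c := by rw [h, zpow_add₀ hv]

lemma qintN_succ (v : k) (hv : v ≠ 0) (m : ℕ) :
    qintN v (m + 1) = v⁻¹ * qintN v m + v ^ (m : ℤ) := by
  unfold qintN
  rw [Finset.sum_range_succ', Finset.mul_sum]
  congr 1
  · refine Finset.sum_congr rfl fun t _ => ?_
    rw [zpow_eq_mul v hv _ (-1) ((m:ℤ) - 1 - 2 * t) (by push_cast; ring), zpow_neg_one]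
  · congr 1
    push_cast
    ring

lemma qintN_succ' (v : k) (hv : v ≠ 0) (m : ℕ) :
    qintN v (m + 1) = v * qintN v m + v ^ (-(m : ℤ)) := by
  unfold qintN
  rw [Finset.sum_range_succ, Finset.mul_sum]
  congr 1
  · refine Finset.sum_congr rfl fun t _ => ?_
    rw [zpow_eq_mul v hv _ 1 ((m:ℤ) - 1 - 2 * t) (by push_cast; ring), zpow_one]
  · congr 1
    push_cast
    ring

lemma qint_succ (v : k) (hv : v ≠ 0) (w : ℤ) :
    qint v (w + 1) = v⁻¹ * qint v w + v ^ w := by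
  unfold qint
  rcases le_or_gt 0 w with h | h
  · rw [if_pos h, if_pos (by omega)]
    have h1 : (w + 1).toNat = w.toNat + 1 := by omega
    rw [h1, qintN_succ v hv]
    congr 2
    omega
  · rcases eq_or_lt_of_le (by omega : w ≤ -1) with h1 | h1
    · subst h1
      rw [if_pos (by omega), if_neg (by omega)]
      norm_num [qintN]
    · rw [if_neg (by omega), if_neg (by omega)]
      have h2 : (-w).toNat = (-(w+1)).toNat + 1 := by omega
      rw [h2, qintN_succ' v hv]
      rw [zpow_eq_mul v hv (-(((-(w+1)).toNat : ℕ) : ℤ)) w 1 (by omega), zpow_one]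
      field_simp
      ring

lemma qint_pred (v : k) (hv : v ≠ 0) (w : ℤ) :
    qint v (w - 1) = v * qint v w - v ^ w := by
  have h := qint_succ v hv (w - 1)
  rw [sub_add_cancel] at h
  rw [h, zpow_eq_mul v hv (w-1) w (-1) (by ring), zpow_neg_one]
  field_simp
  ring

end aux

section aux2
variable {k : Type*} [Field k]

lemma Eop_apply (v : k) {n : ℕ} (f : Tn k n) (i : Fin n → Bool) :
    Eop v n f i = ∑ j ∈ Finset.univ.filter (fun j => i j = true),
      v ^ (∑ t ∈ Finset.univ.filter (fun t => t < j), sgn (i t)) *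
        f (Function.update i j false) := rfl

lemma Fop_apply (v : k) {n : ℕ} (f : Tn k n) (i : Fin n → Bool) :
    Fop v n f i = ∑ j ∈ Finset.univ.filter (fun j => i j = false),
      v ^ (-(∑ t ∈ Finset.univ.filter (fun t => j < t), sgn (i t))) *
        f (Function.update i j true) := rfl

lemma sum_sgn_update {n : ℕ} (s : Finset (Fin n)) (κ : Fin n → Bool) (j : Fin n) (c : Bool) :
    ∑ t ∈ s, sgn (Function.update κ j c t)
      = (∑ t ∈ s, sgn (κ t)) + (if j ∈ s then sgn c - sgn (κ j) else 0) := by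
  have h : ∀ t, sgn (Function.update κ j c t)
      = sgn (κ t) + (if t = j then sgn c - sgn (κ j) else 0) := by
    intro t
    rcases eq_or_ne t j with rfl | h
    · simp
    · simp [Function.update_of_ne h, h]
  simp_rw [h]
  rw [Finset.sum_add_distrib, Finset.sum_ite_eq' s j]

lemma wt_update {n : ℕ} (κ : Fin n → Bool) (j : Fin n) (c : Bool) :
    wt (Function.update κ j c) = wt κ + (sgn c - sgn (κ j)) := by
  unfold wt
  rw [sum_sgn_update]
  simp

/-- drop the last coordinate of an index -/
def front {n : ℕ} (i : Fin (n+1) → Bool) : Fin n → Bool := fun t => i t.castSucc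

lemma wt_front {n : ℕ} (i : Fin (n+1) → Bool) :
    wt i = wt (front i) + sgn (i (Fin.last n)) := by
  unfold wt
  rw [Fin.sum_univ_castSucc]
  rfl

lemma pref_castSucc {n : ℕ} (i : Fin (n+1) → Bool) (j : Fin n) :
    ∑ t ∈ Finset.univ.filter (fun t => t < j.castSucc), sgn (i t)
      = ∑ t ∈ Finset.univ.filter (fun t => t < j), sgn (front i t) := by
  rw [Finset.sum_filter, Finset.sum_filter, Fin.sum_univ_castSucc]
  simp [Fin.castSucc_lt_castSucc_iff, front, (Fin.castSucc_lt_last j).not_gt]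

lemma pref_last {n : ℕ} (i : Fin (n+1) → Bool) :
    ∑ t ∈ Finset.univ.filter (fun t => t < Fin.last n), sgn (i t) = wt (front i) := by
  rw [Finset.sum_filter, Fin.sum_univ_castSucc]
  simp [Fin.castSucc_lt_last, wt, front]

lemma suf_castSucc {n : ℕ} (i : Fin (n+1) → Bool) (j : Fin n) :
    ∑ t ∈ Finset.univ.filter (fun t => j.castSucc < t), sgn (i t)
      = (∑ t ∈ Finset.univ.filter (fun t => j < t), sgn (front i t))
        + sgn (i (Fin.last n)) := by
  rw [Finset.sum_filter, Finset.sum_filter, Fin.sum_univ_castSucc]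
  simp [Fin.castSucc_lt_castSucc_iff, front, Fin.castSucc_lt_last]

lemma suf_last {n : ℕ} (i : Fin (n+1) → Bool) :
    ∑ t ∈ Finset.univ.filter (fun t => Fin.last n < t), sgn (i t) = 0 := by
  rw [Finset.sum_filter, Fin.sum_univ_castSucc]
  simp [(Fin.le_last _).not_gt, fun t : Fin n => (Fin.castSucc_lt_last t).le.not_gt]

lemma front_update_castSucc {n : ℕ} (i : Fin (n+1) → Bool) (j : Fin n) (c : Bool) :
    front (Function.update i j.castSucc c) = Function.update (front i) j c := by
  funext t
  rcases eq_or_ne t j with rfl | h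
  · simp [front]
  · have h2 : t.castSucc ≠ j.castSucc := fun hc => h (Fin.castSucc_injective n hc)
    simp [front, Function.update_of_ne h, Function.update_of_ne h2]

lemma front_update_last {n : ℕ} (i : Fin (n+1) → Bool) (c : Bool) :
    front (Function.update i (Fin.last n) c) = front i := by
  funext t
  simp [front, Function.update_of_ne (Fin.castSucc_lt_last t).ne]

lemma tensY_update_castSucc {n : ℕ} (c : Bool) (f : Tn k n) (i : Fin (n+1) → Bool)
    (j : Fin n) (d : Bool) :
    tensY c f (Function.update i j.castSucc d)
      = if i (Fin.last n) = c then f (Function.update (front i) j d) else 0 := by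
  unfold tensY
  rw [Function.update_of_ne (Fin.castSucc_lt_last j).ne']
  rw [show (fun t : Fin n => Function.update i j.castSucc d t.castSucc)
      = front (Function.update i j.castSucc d) from rfl]
  rw [front_update_castSucc]

lemma tensY_update_last {n : ℕ} (c : Bool) (f : Tn k n) (i : Fin (n+1) → Bool) (d : Bool) :
    tensY c f (Function.update i (Fin.last n) d)
      = if d = c then f (front i) else 0 := by
  unfold tensY
  rw [Function.update_self]
  rw [show (fun t : Fin n => Function.update i (Fin.last n) d t.castSucc)
      = front (Function.update i (Fin.last n) d) from rfl]
  rw [front_update_last]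

lemma tensY_apply {n : ℕ} (c : Bool) (f : Tn k n) (i : Fin (n+1) → Bool) :
    tensY c f i = if i (Fin.last n) = c then f (front i) else 0 := rfl

lemma E_tensY (v : k) {n : ℕ} (c : Bool) (f : Tn k n) (i : Fin (n+1) → Bool) :
    Eop v (n+1) (tensY c f) i =
      (if i (Fin.last n) = c then Eop v n f (front i) else 0)
      + (if i (Fin.last n) = true ∧ c = false then v ^ (wt (front i)) * f (front i) else 0) := by
  rw [Eop_apply, Finset.sum_filter, Fin.sum_univ_castSucc]
  have hterm : ∀ j : Fin n, (if i j.castSucc = true then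
        v ^ (∑ t ∈ Finset.univ.filter (fun t => t < j.castSucc), sgn (i t)) *
          tensY c f (Function.update i j.castSucc false) else 0)
      = if i (Fin.last n) = c then (if front i j = true then
          v ^ (∑ t ∈ Finset.univ.filter (fun t => t < j), sgn (front i t)) *
            f (Function.update (front i) j false) else 0) else 0 := by
    intro j
    rw [tensY_update_castSucc, pref_castSucc]
    by_cases hl : i (Fin.last n) = c <;> by_cases hj : i j.castSucc = true <;>
      simp [hl, hj, front]
  rw [Finset.sum_congr rfl fun j _ => hterm j]
  rw [tensY_update_last, pref_last]
  cases hc2 : i (Fin.last n) <;> cases c <;>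
    simp [hc2, Eop_apply, Finset.sum_filter]

end aux2

section aux3
variable {k : Type*} [Field k]

/-- prefix sum -/
def prefZ {n : ℕ} (κ : Fin n → Bool) (j : Fin n) : ℤ :=
  ∑ t ∈ Finset.univ.filter (fun t => t < j), sgn (κ t)

/-- suffix sum -/
def sufZ {n : ℕ} (κ : Fin n → Bool) (j : Fin n) : ℤ :=
  ∑ t ∈ Finset.univ.filter (fun t => j < t), sgn (κ t)

lemma prefZ_castSucc {n : ℕ} (i : Fin (n+1) → Bool) (j : Fin n) :
    prefZ i j.castSucc = prefZ (front i) j := pref_castSucc i j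

lemma sufZ_castSucc {n : ℕ} (i : Fin (n+1) → Bool) (j : Fin n) :
    sufZ i j.castSucc = sufZ (front i) j + sgn (i (Fin.last n)) := suf_castSucc i j

lemma prefZ_last {n : ℕ} (i : Fin (n+1) → Bool) :
    prefZ i (Fin.last n) = wt (front i) := pref_last i

lemma sufZ_last {n : ℕ} (i : Fin (n+1) → Bool) : sufZ i (Fin.last n) = 0 := suf_last i

lemma Eop_apply' (v : k) {n : ℕ} (f : Tn k n) (i : Fin n → Bool) :
    Eop v n f i = ∑ j ∈ Finset.univ.filter (fun j => i j = true),
      v ^ (prefZ i j) * f (Function.update i j false) := rfl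

lemma Fop_apply' (v : k) {n : ℕ} (f : Tn k n) (i : Fin n → Bool) :
    Fop v n f i = ∑ j ∈ Finset.univ.filter (fun j => i j = false),
      v ^ (-(sufZ i j)) * f (Function.update i j true) := rfl

lemma filter_update_false {n : ℕ} (κ : Fin n → Bool) (j : Fin n) (h : κ j = true) :
    Finset.univ.filter (fun l => Function.update κ j false l = false)
      = insert j (Finset.univ.filter (fun l => κ l = false)) := by
  ext l
  rcases eq_or_ne l j with rfl | hl
  · simp
  · simp [Function.update_of_ne hl, hl]

lemma filter_update_true {n : ℕ} (κ : Fin n → Bool) (l : Fin n) (h : κ l = false) :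
    Finset.univ.filter (fun j => Function.update κ l true j = true)
      = insert l (Finset.univ.filter (fun j => κ j = true)) := by
  ext j
  rcases eq_or_ne j l with rfl | hj
  · simp
  · simp [Function.update_of_ne hj, hj]

lemma Fop_update (v : k) (hv : v ≠ 0) {n : ℕ} (f : Tn k n) (κ : Fin n → Bool) (j : Fin n)
    (h : κ j = true) :
    Fop v n f (Function.update κ j false)
      = v ^ (-(sufZ κ j)) * f κ
        + ∑ l ∈ Finset.univ.filter (fun l => κ l = false),
            v ^ (-(sufZ κ l) + (if l < j then 2 else 0)) *
              f (Function.update (Function.update κ j false) l true) := by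
  rw [Fop_apply', filter_update_false κ j h, Finset.sum_insert (by simp [h])]
  congr 1
  · have h1 : sufZ (Function.update κ j false) j = sufZ κ j := by
      unfold sufZ
      rw [sum_sgn_update]
      simp
    rw [h1, Function.update_idem, Function.update_eq_self_iff.mpr h.symm]
  · refine Finset.sum_congr rfl fun l hl => ?_
    have hlf : κ l = false := by simpa using hl
    have h1 : sufZ (Function.update κ j false) l
        = sufZ κ l + (if l < j then -2 else 0) := by
      unfold sufZ
      rw [sum_sgn_update]
      congr 1
      by_cases hlt : l < j <;> simp [hlt, h, sgn]
    rw [h1]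
    congr 2
    by_cases hlt : l < j <;> simp [hlt] <;> ring

lemma Eop_update (v : k) (hv : v ≠ 0) {n : ℕ} (f : Tn k n) (κ : Fin n → Bool) (l : Fin n)
    (h : κ l = false) :
    Eop v n f (Function.update κ l true)
      = v ^ (prefZ κ l) * f κ
        + ∑ j ∈ Finset.univ.filter (fun j => κ j = true),
            v ^ (prefZ κ j + (if l < j then 2 else 0)) *
              f (Function.update (Function.update κ l true) j false) := by
  rw [Eop_apply', filter_update_true κ l h, Finset.sum_insert (by simp [h])]
  congr 1
  · have h1 : prefZ (Function.update κ l true) l = prefZ κ l := by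
      unfold prefZ
      rw [sum_sgn_update]
      simp
    rw [h1, Function.update_idem, Function.update_eq_self_iff.mpr h.symm]
  · refine Finset.sum_congr rfl fun j hj => ?_
    have hjt : κ j = true := by simpa using hj
    have h1 : prefZ (Function.update κ l true) j
        = prefZ κ j + (if l < j then 2 else 0) := by
      unfold prefZ
      rw [sum_sgn_update]
      congr 1
      by_cases hlt : l < j <;> simp [hlt, h, sgn]
    rw [h1]

lemma EF_apply (v : k) (hv : v ≠ 0) {n : ℕ} (f : Tn k n) (κ : Fin n → Bool) :
    Eop v n (Fop v n f) κ
      = (∑ j ∈ Finset.univ.filter (fun j => κ j = true), v ^ (prefZ κ j - sufZ κ j)) * f κ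
        + ∑ j ∈ Finset.univ.filter (fun j => κ j = true),
            ∑ l ∈ Finset.univ.filter (fun l => κ l = false),
              v ^ (prefZ κ j - sufZ κ l + (if l < j then 2 else 0)) *
                f (Function.update (Function.update κ j false) l true) := by
  rw [Eop_apply']
  have step : ∀ j ∈ Finset.univ.filter (fun j => κ j = true),
      v ^ (prefZ κ j) * Fop v n f (Function.update κ j false)
        = v ^ (prefZ κ j - sufZ κ j) * f κ
          + ∑ l ∈ Finset.univ.filter (fun l => κ l = false),
              v ^ (prefZ κ j - sufZ κ l + (if l < j then 2 else 0)) *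
                f (Function.update (Function.update κ j false) l true) := by
    intro j hj
    have hjt : κ j = true := by simpa using hj
    rw [Fop_update v hv f κ j hjt, mul_add, Finset.mul_sum]
    congr 1
    · rw [← mul_assoc, ← zpow_add₀ hv, ← sub_eq_add_neg]
    · refine Finset.sum_congr rfl fun l _ => ?_
      rw [← mul_assoc, ← zpow_add₀ hv]
      rw [show prefZ κ j + (-(sufZ κ l) + (if l < j then 2 else 0))
          = prefZ κ j - sufZ κ l + (if l < j then 2 else 0) by ring]
  rw [Finset.sum_congr rfl step, Finset.sum_add_distrib, Finset.sum_mul]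

lemma FE_apply (v : k) (hv : v ≠ 0) {n : ℕ} (f : Tn k n) (κ : Fin n → Bool) :
    Fop v n (Eop v n f) κ
      = (∑ l ∈ Finset.univ.filter (fun l => κ l = false), v ^ (prefZ κ l - sufZ κ l)) * f κ
        + ∑ l ∈ Finset.univ.filter (fun l => κ l = false),
            ∑ j ∈ Finset.univ.filter (fun j => κ j = true),
              v ^ (prefZ κ j - sufZ κ l + (if l < j then 2 else 0)) *
                f (Function.update (Function.update κ l true) j false) := by
  rw [Fop_apply']
  have step : ∀ l ∈ Finset.univ.filter (fun l => κ l = false),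
      v ^ (-(sufZ κ l)) * Eop v n f (Function.update κ l true)
        = v ^ (prefZ κ l - sufZ κ l) * f κ
          + ∑ j ∈ Finset.univ.filter (fun j => κ j = true),
              v ^ (prefZ κ j - sufZ κ l + (if l < j then 2 else 0)) *
                f (Function.update (Function.update κ l true) j false) := by
    intro l hl
    have hlf : κ l = false := by simpa using hl
    rw [Eop_update v hv f κ l hlf, mul_add, Finset.mul_sum]
    congr 1
    · rw [← mul_assoc, ← zpow_add₀ hv]
      rw [show -(sufZ κ l) + prefZ κ l = prefZ κ l - sufZ κ l by ring]
    · refine Finset.sum_congr rfl fun j _ => ?_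
      rw [← mul_assoc, ← zpow_add₀ hv]
      rw [show -(sufZ κ l) + (prefZ κ j + (if l < j then 2 else 0))
          = prefZ κ j - sufZ κ l + (if l < j then 2 else 0) by ring]
  rw [Finset.sum_congr rfl step, Finset.sum_add_distrib, Finset.sum_mul]

lemma cross_eq (v : k) {n : ℕ} (f : Tn k n) (κ : Fin n → Bool) :
    (∑ j ∈ Finset.univ.filter (fun j => κ j = true),
        ∑ l ∈ Finset.univ.filter (fun l => κ l = false),
          v ^ (prefZ κ j - sufZ κ l + (if l < j then 2 else 0)) *
            f (Function.update (Function.update κ j false) l true))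
      = ∑ l ∈ Finset.univ.filter (fun l => κ l = false),
          ∑ j ∈ Finset.univ.filter (fun j => κ j = true),
            v ^ (prefZ κ j - sufZ κ l + (if l < j then 2 else 0)) *
              f (Function.update (Function.update κ l true) j false) := by
  rw [Finset.sum_comm]
  refine Finset.sum_congr rfl fun l hl => Finset.sum_congr rfl fun j hj => ?_
  have hlf : κ l = false := by simpa using hl
  have hjt : κ j = true := by simpa using hj
  have hne : j ≠ l := by
    intro e
    rw [e, hlf] at hjt
    exact Bool.false_ne_true hjt
  rw [Function.update_comm hne]

lemma qsum (v : k) (hv : v ≠ 0) {n : ℕ} (κ : Fin n → Bool) :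
    ∑ j : Fin n, (if κ j = true then (1:k) else -1) * v ^ (prefZ κ j - sufZ κ j)
      = qint v (wt κ) := by
  induction n with
  | zero => simp [wt, qint, qintN]
  | succ n ih =>
    rw [Fin.sum_univ_castSucc]
    have hterm : ∀ j : Fin n,
        (if κ j.castSucc = true then (1:k) else -1) * v ^ (prefZ κ j.castSucc - sufZ κ j.castSucc)
          = ((if front κ j = true then (1:k) else -1)
              * v ^ (prefZ (front κ) j - sufZ (front κ) j)) * v ^ (-(sgn (κ (Fin.last n)))) := by
      intro j
      rw [prefZ_castSucc, sufZ_castSucc, mul_assoc, ← zpow_add₀ hv]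
      rw [show prefZ (front κ) j - sufZ (front κ) j + -sgn (κ (Fin.last n))
          = prefZ (front κ) j - (sufZ (front κ) j + sgn (κ (Fin.last n))) by ring]
      rfl
    rw [Finset.sum_congr rfl fun j _ => hterm j, ← Finset.sum_mul, ih (front κ)]
    rw [prefZ_last, sufZ_last, wt_front κ]
    cases he : κ (Fin.last n)
    · rw [show wt (front κ) + sgn false = wt (front κ) - 1 by simp [sgn]; try omega]
      rw [qint_pred v hv]
      simp [sgn, zpow_one]
      ring
    · rw [show wt (front κ) + sgn true = wt (front κ) + 1 by simp [sgn]; try omega]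
      rw [qint_succ v hv]
      simp [sgn, zpow_neg_one]
      ring

lemma EF_of_max (v : k) (hv : v ≠ 0) {n : ℕ} (f : Tn k n) (w : ℤ)
    (hmax : Eop v n f = 0) (hw : ∀ i, f i ≠ 0 → wt i = w) (κ : Fin n → Bool) :
    Eop v n (Fop v n f) κ = qint v w * f κ := by
  have hFE : Fop v n (Eop v n f) κ = 0 := by rw [hmax, map_zero]; rfl
  rw [FE_apply v hv f κ] at hFE
  have h1 := EF_apply v hv f κ
  rw [cross_eq v f κ] at h1
  by_cases hfκ : f κ = 0
  · rw [hfκ, mul_zero] at h1 hFE ⊢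
    rw [zero_add] at hFE
    rw [h1, hFE, add_zero]
  · have hwκ : wt κ = w := hw κ hfκ
    have hq : (∑ j ∈ Finset.univ.filter (fun j => κ j = true), v ^ (prefZ κ j - sufZ κ j))
        - (∑ l ∈ Finset.univ.filter (fun l => κ l = false), v ^ (prefZ κ l - sufZ κ l))
        = qint v w := by
      rw [← hwκ, ← qsum v hv κ]
      rw [← Finset.sum_filter_add_sum_filter_not Finset.univ (fun j => κ j = true)
        (fun j => (if κ j = true then (1:k) else -1) * v ^ (prefZ κ j - sufZ κ j))]
      have e1 : ∀ j ∈ Finset.univ.filter (fun j => κ j = true),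
          (if κ j = true then (1:k) else -1) * v ^ (prefZ κ j - sufZ κ j)
            = v ^ (prefZ κ j - sufZ κ j) := by
        intro j hj
        have : κ j = true := by simpa using hj
        simp [this]
      have e2 : ∀ j ∈ Finset.univ.filter (fun j => ¬ κ j = true),
          (if κ j = true then (1:k) else -1) * v ^ (prefZ κ j - sufZ κ j)
            = -(v ^ (prefZ κ j - sufZ κ j)) := by
        intro j hj
        have : ¬ κ j = true := by simpa using hj
        simp [this]
      rw [Finset.sum_congr rfl e1, Finset.sum_congr rfl e2, Finset.sum_neg_distrib]
      have e3 : Finset.univ.filter (fun j => ¬ κ j = true)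
          = Finset.univ.filter (fun j => κ j = false) := by
        ext j
        simp
      rw [e3]
      ring
    calc Eop v n (Fop v n f) κ
        = _ := h1
      _ = qint v w * f κ := by
          have hX : (∑ l ∈ Finset.univ.filter (fun l => κ l = false),
              ∑ j ∈ Finset.univ.filter (fun j => κ j = true),
                v ^ (prefZ κ j - sufZ κ l + (if l < j then 2 else 0)) *
                  f (Function.update (Function.update κ l true) j false))
              = -((∑ l ∈ Finset.univ.filter (fun l => κ l = false),
                  v ^ (prefZ κ l - sufZ κ l)) * f κ) := by linear_combination hFE
          rw [hX, ← hq]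
          ring

end aux3

section aux4
variable {k : Type*} [Field k]

lemma Phi2_apply (v : k) {n : ℕ} (w : ℤ) (f : Tn k n) (i : Fin (n+1) → Bool) :
    Phi2 v w f i = qint v w * tensY false f i - v ^ w * tensY true (Fop v n f) i := rfl

lemma front_snoc {n : ℕ} (i : Fin n → Bool) (c : Bool) : front (Fin.snoc i c) = i := by
  funext t
  simp [front]

lemma wt_Fop (v : k) {n : ℕ} (f : Tn k n) (w : ℤ) (hw : ∀ i, f i ≠ 0 → wt i = w)
    (κ : Fin n → Bool) (hκ : Fop v n f κ ≠ 0) : wt κ = w - 2 := by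
  by_contra hne
  apply hκ
  rw [Fop_apply']
  refine Finset.sum_eq_zero fun j hj => ?_
  have hjf : κ j = false := by simpa using hj
  by_cases hf : f (Function.update κ j true) = 0
  · rw [hf, mul_zero]
  · exfalso
    have h1 := hw _ hf
    rw [wt_update] at h1
    rw [hjf] at h1
    simp [sgn] at h1
    exact hne (by omega)

end aux4

/-- `Φ₁` and `Φ₂` of a maximal vector are maximal, of weights
`i_b + 1` and `i_b - 1` respectively. -/
theorem stmt_7 {k : Type*} [Field k] (v : k) (hv : v ≠ 0) (n : ℕ)
    (b : Tn k n) (w : ℤ) (hb0 : b ≠ 0) (hbw : ∀ i, b i ≠ 0 → wt i = w)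
    (hmax : Eop v n b = 0) :
    (Eop v (n + 1) (Phi1 b) = 0 ∧ Phi1 b ≠ 0 ∧
      (∀ i, Phi1 b i ≠ 0 → wt i = w + 1)) ∧
    (0 < w →
      Eop v (n + 1) (Phi2 v w b) = 0 ∧
      (∀ i, Phi2 v w b i ≠ 0 → wt i = w - 1) ∧
      (qint v w ≠ 0 → Phi2 v w b ≠ 0)) := by
  obtain ⟨i₀, hi₀⟩ := Function.ne_iff.mp hb0
  constructor
  · refine ⟨?_, ?_, ?_⟩
    · funext i
      show Eop v (n+1) (tensY true b) i = (0 : Tn k (n+1)) i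
      rw [E_tensY]
      simp [hmax]
    · intro h
      have h2 : Phi1 b (Fin.snoc i₀ true) = b i₀ := by
        rw [show Phi1 b (Fin.snoc i₀ true) = tensY true b (Fin.snoc i₀ true) from rfl,
          tensY_apply]
        simp [front_snoc]
      exact hi₀ (by rw [← h2, h]; rfl)
    · intro i hi
      have h2 : tensY true b i ≠ 0 := hi
      rw [tensY_apply] at h2
      by_cases hl : i (Fin.last n) = true
      · rw [if_pos hl] at h2
        rw [wt_front i, hbw _ h2, hl]
        rfl
      · rw [if_neg hl] at h2
        exact absurd rfl h2
  · intro _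
    refine ⟨?_, ?_, ?_⟩
    · funext i
      show Eop v (n+1) (Phi2 v w b) i = (0 : Tn k (n+1)) i
      rw [show Phi2 v w b = qint v w • tensY false b - v ^ w • tensY true (Fop v n b) from rfl]
      rw [map_sub, map_smul, map_smul, Pi.sub_apply, Pi.smul_apply, Pi.smul_apply,
        smul_eq_mul, smul_eq_mul, E_tensY, E_tensY,
        EF_of_max v hv b w hmax hbw (front i)]
      by_cases hl : i (Fin.last n) = true
      · simp only [hl, hmax]
        by_cases hbf : b (front i) = 0
        · simp [hbf]
        · rw [hbw _ hbf]
          simp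
          ring
      · simp [hl, hmax]
    · intro i hi
      have h2 := hi
      rw [Phi2_apply, tensY_apply, tensY_apply] at h2
      cases hl : i (Fin.last n)
      · rw [hl] at h2
        simp only [if_pos, if_neg, Bool.false_eq_true, if_false, if_true] at h2
        have hb2 : b (front i) ≠ 0 := by
          intro h0
          rw [h0] at h2
          simp at h2
        rw [wt_front i, hbw _ hb2, hl]
        rfl
      · rw [hl] at h2
        simp only [if_pos, if_neg, Bool.true_eq_false, if_false, if_true] at h2
        have hb2 : Fop v n b (front i) ≠ 0 := by
          intro h0
          rw [h0] at h2
          simp at h2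
        rw [wt_front i, wt_Fop v b w hbw _ hb2, hl]
        rw [show sgn true = 1 from rfl]
        ring
    · intro hq h
      have h3 : Phi2 v w b (Fin.snoc i₀ false) = qint v w * b i₀ := by
        rw [Phi2_apply, tensY_apply, tensY_apply]
        simp [front_snoc]
      exact (mul_ne_zero hq hi₀) (by rw [← h3, h]; rfl)
end
end

section
/- The operators ė_1, …, ė_{n−1} on V^{⊗n} satisfy the Temperley–Lieb relations with parameter δ = −(v + v^{−1}): ė_i² = −(v + v^{−1}) ė_i for all i; ė_i ė_j ė_i = ė_i whenever |i − j| = 1; and ė_i ė_j = ė_j ė_i whenever |i − j| > 1. -/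
noncomputable section
attribute [local instance] Classical.propDecidable

variable {k : Type*} [Field k]

section TLaux
variable {k : Type*} [Field k] {n : ℕ}

lemma eop_apply (v : k) (a b : Fin n) (f : Tn k n) (i : Fin n → Bool) :
    eop v a b f i =
      if i a = true ∧ i b = false then -v⁻¹ * f i + f (swapPair a b i)
      else if i a = false ∧ i b = true then f (swapPair a b i) - v * f i
      else 0 := rfl

lemma sp_fst (a b : Fin n) (i : Fin n → Bool) : swapPair a b i a = i b := by simp [swapPair]

lemma sp_snd {a b : Fin n} (h : b ≠ a) (i : Fin n → Bool) : swapPair a b i b = i a := by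
  simp [swapPair, h]

lemma sp_other {a b c : Fin n} (h1 : c ≠ a) (h2 : c ≠ b) (i : Fin n → Bool) :
    swapPair a b i c = i c := by simp [swapPair, h1, h2]

lemma sp_invol (a b : Fin n) (i : Fin n → Bool) : swapPair a b (swapPair a b i) = i := by
  funext t
  simp only [swapPair]
  split_ifs <;> simp_all

lemma sp_comm {a b c d : Fin n} (hca : c ≠ a) (hcb : c ≠ b) (hda : d ≠ a) (hdb : d ≠ b)
    (i : Fin n → Bool) : swapPair a b (swapPair c d i) = swapPair c d (swapPair a b i) := by
  funext t
  simp only [swapPair]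
  split_ifs <;> simp_all

lemma tl1 (v : k) (hv : v ≠ 0) {a b : Fin n} (hab : a ≠ b) :
    eop v a b ∘ₗ eop v a b = (-(v + v⁻¹)) • eop v a b := by
  apply LinearMap.ext; intro f; funext i
  have hba := hab.symm
  simp only [LinearMap.comp_apply, LinearMap.smul_apply, Pi.smul_apply, smul_eq_mul]
  cases ha : i a <;> cases hb : i b <;>
    simp [eop_apply, sp_fst, sp_snd hba, sp_invol, ha, hb] <;>
    field_simp <;> ring

lemma tl2a (v : k) (hv : v ≠ 0) {a b c : Fin n} (hab : a ≠ b) (hac : a ≠ c) (hbc : b ≠ c) :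
    eop v a b ∘ₗ eop v b c ∘ₗ eop v a b = eop v a b := by
  have hba := hab.symm; have hca := hac.symm; have hcb := hbc.symm
  apply LinearMap.ext; intro f; funext i
  simp only [LinearMap.comp_apply]
  cases ha : i a <;> cases hb : i b <;> cases hc : i c <;>
    simp [eop_apply, sp_fst, sp_snd hba, sp_snd hcb, sp_other hca hcb, sp_other hab hac,
      sp_invol, ha, hb, hc] <;>
    field_simp <;> ring

lemma tl2b (v : k) (hv : v ≠ 0) {a b c : Fin n} (hab : a ≠ b) (hac : a ≠ c) (hbc : b ≠ c) :
    eop v b c ∘ₗ eop v a b ∘ₗ eop v b c = eop v b c := by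
  have hba := hab.symm; have hca := hac.symm; have hcb := hbc.symm
  apply LinearMap.ext; intro f; funext i
  simp only [LinearMap.comp_apply]
  cases ha : i a <;> cases hb : i b <;> cases hc : i c <;>
    simp [eop_apply, sp_fst, sp_snd hba, sp_snd hcb, sp_other hca hcb, sp_other hab hac,
      sp_invol, ha, hb, hc] <;>
    field_simp <;> ring

lemma tl3 (v : k) {a b c d : Fin n} (hab : a ≠ b) (hcd : c ≠ d)
    (hca : c ≠ a) (hcb : c ≠ b) (hda : d ≠ a) (hdb : d ≠ b) :
    eop v a b ∘ₗ eop v c d = eop v c d ∘ₗ eop v a b := by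
  have hba := hab.symm; have hdc := hcd.symm
  have hac := hca.symm; have hbc := hcb.symm; have had := hda.symm; have hbd := hdb.symm
  apply LinearMap.ext; intro f; funext i
  simp only [LinearMap.comp_apply]
  cases ha : i a <;> cases hb : i b <;> cases hc : i c <;> cases hd : i d <;>
    simp [eop_apply, sp_fst, sp_snd hba, sp_snd hdc, sp_other hca hcb, sp_other hda hdb,
      sp_other hac had, sp_other hbc hbd, sp_comm hca hcb hda hdb, ha, hb, hc, hd] <;>
    ring

end TLaux

/-- the operators `ė_i` satisfy the Temperley--Lieb relations with
parameter `δ = -(v + v⁻¹)`.  (Positions are 0-indexed: `ė` acts on tensor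
factors `i` and `i+1`.) -/
theorem stmt_8 {k : Type*} [Field k] (v : k) (hv : v ≠ 0) (n : ℕ) :
    (∀ (i : ℕ) (hi : i + 1 < n),
      eop v (⟨i, by omega⟩ : Fin n) ⟨i + 1, hi⟩ ∘ₗ eop v ⟨i, by omega⟩ ⟨i + 1, hi⟩ =
        (-(v + v⁻¹)) • eop v (⟨i, by omega⟩ : Fin n) ⟨i + 1, hi⟩) ∧
    (∀ (i j : ℕ) (hi : i + 1 < n) (hj : j + 1 < n), (i = j + 1 ∨ j = i + 1) →
      eop v (⟨i, by omega⟩ : Fin n) ⟨i + 1, hi⟩ ∘ₗ eop v ⟨j, by omega⟩ ⟨j + 1, hj⟩ ∘ₗ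
          eop v ⟨i, by omega⟩ ⟨i + 1, hi⟩ =
        eop v ⟨i, by omega⟩ ⟨i + 1, hi⟩) ∧
    (∀ (i j : ℕ) (hi : i + 1 < n) (hj : j + 1 < n), (i + 1 < j ∨ j + 1 < i) →
      eop v (⟨i, by omega⟩ : Fin n) ⟨i + 1, hi⟩ ∘ₗ eop v ⟨j, by omega⟩ ⟨j + 1, hj⟩ =
        eop v ⟨j, by omega⟩ ⟨j + 1, hj⟩ ∘ₗ eop v ⟨i, by omega⟩ ⟨i + 1, hi⟩) := by
  refine ⟨?_, ?_, ?_⟩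
  · intro i hi
    exact tl1 v hv ((by simp only [ne_eq, Fin.mk.injEq]; omega))
  · intro i j hi hj h
    rcases h with h | h
    · subst h
      exact tl2b v hv (a := ⟨j, by omega⟩) (b := ⟨j + 1, by omega⟩) (c := ⟨j + 1 + 1, hi⟩)
        ((by simp only [ne_eq, Fin.mk.injEq]; omega)) ((by simp only [ne_eq, Fin.mk.injEq]; omega))
        ((by simp only [ne_eq, Fin.mk.injEq]; omega))
    · subst h
      exact tl2a v hv (a := ⟨i, by omega⟩) (b := ⟨i + 1, by omega⟩) (c := ⟨i + 1 + 1, hj⟩)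
        ((by simp only [ne_eq, Fin.mk.injEq]; omega)) ((by simp only [ne_eq, Fin.mk.injEq]; omega))
        ((by simp only [ne_eq, Fin.mk.injEq]; omega))
  · intro i j hi hj h
    exact tl3 v ((by simp only [ne_eq, Fin.mk.injEq]; omega)) ((by simp only [ne_eq, Fin.mk.injEq]; omega))
      ((by simp only [ne_eq, Fin.mk.injEq]; omega)) ((by simp only [ne_eq, Fin.mk.injEq]; omega))
      ((by simp only [ne_eq, Fin.mk.injEq]; omega)) ((by simp only [ne_eq, Fin.mk.injEq]; omega))
end
end

section
/- If b, b' ∈ V^{⊗m} are weight vectors with b of weight i_b, then ⟨E b, b'⟩ = v^{i_b + 1} ⟨b, F b'⟩. -/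
noncomputable section
attribute [local instance] Classical.propDecidable

variable {k : Type*} [Field k]

lemma split_sum {n : ℕ} (g : Fin n → ℤ) (j : Fin n) :
    (∑ t ∈ Finset.univ.filter (fun t => t < j), g t) + g j
      + (∑ t ∈ Finset.univ.filter (fun t => j < t), g t) = ∑ t, g t := by
  classical
  have h : (Finset.univ.filter (fun t : Fin n => ¬ t < j))
      = insert j (Finset.univ.filter (fun t => j < t)) := by
    ext t
    simp only [Finset.mem_filter, Finset.mem_univ, true_and, Finset.mem_insert, not_lt]
    constructor
    · intro h; rcases lt_or_eq_of_le h with h | h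
      · exact Or.inr h
      · exact Or.inl h.symm
    · rintro (rfl | h)
      · exact le_refl _
      · exact le_of_lt h
  rw [← Finset.sum_filter_add_sum_filter_not Finset.univ (fun t => t < j) g, h,
    Finset.sum_insert (by simp)]
  ring

/-- adjointness of `E` and `F` with respect to the bilinear form. -/
theorem stmt_10 {k : Type*} [Field k] (v : k) (hv : v ≠ 0) (n : ℕ)
    (b b' : Tn k n) (w : ℤ) (hb0 : b ≠ 0) (hbw : ∀ i, b i ≠ 0 → wt i = w)
    (hb'0 : b' ≠ 0) (hb'w : ∃ w' : ℤ, ∀ i, b' i ≠ 0 → wt i = w') :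
    form (Eop v n b) b' = v ^ (w + 1) * form b (Fop v n b') := by
  classical
  have hE : form (Eop v n b) b'
      = ∑ p ∈ (Finset.univ ×ˢ Finset.univ).filter
          (fun p : (Fin n → Bool) × Fin n => p.1 p.2 = true),
          v ^ (∑ t ∈ Finset.univ.filter (fun t => t < p.2), sgn (p.1 t))
            * b (Function.update p.1 p.2 false) * b' p.1 := by
    rw [form, Finset.sum_filter, Finset.sum_product]
    refine Finset.sum_congr rfl fun i _ => ?_
    simp only [Eop, LinearMap.coe_mk, AddHom.coe_mk]
    rw [Finset.sum_mul, Finset.sum_filter]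
  have hF : v ^ (w + 1) * form b (Fop v n b')
      = ∑ p ∈ (Finset.univ ×ˢ Finset.univ).filter
          (fun p : (Fin n → Bool) × Fin n => p.1 p.2 = false),
          v ^ (w + 1) * (b p.1
            * (v ^ (-(∑ t ∈ Finset.univ.filter (fun t => p.2 < t), sgn (p.1 t)))
              * b' (Function.update p.1 p.2 true))) := by
    rw [form, Finset.mul_sum, Finset.sum_filter, Finset.sum_product]
    refine Finset.sum_congr rfl fun i _ => ?_
    simp only [Fop, LinearMap.coe_mk, AddHom.coe_mk]
    rw [Finset.mul_sum, Finset.mul_sum, Finset.sum_filter]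
  rw [hE, hF]
  refine Finset.sum_nbij'
    (fun p : (Fin n → Bool) × Fin n => (Function.update p.1 p.2 false, p.2))
    (fun p : (Fin n → Bool) × Fin n => (Function.update p.1 p.2 true, p.2))
    ?_ ?_ ?_ ?_ ?_
  · intro p hp
    exact Finset.mem_filter.mpr ⟨Finset.mem_product.mpr ⟨Finset.mem_univ _, Finset.mem_univ _⟩,
      Function.update_self _ _ _⟩
  · intro p hp
    exact Finset.mem_filter.mpr ⟨Finset.mem_product.mpr ⟨Finset.mem_univ _, Finset.mem_univ _⟩,
      Function.update_self _ _ _⟩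
  · intro p hp
    simp only [Finset.mem_filter] at hp
    show (Function.update (Function.update p.1 p.2 false) p.2 true, p.2) = p
    rw [Function.update_idem, ← hp.2, Function.update_eq_self]
  · intro p hp
    simp only [Finset.mem_filter] at hp
    show (Function.update (Function.update p.1 p.2 true) p.2 false, p.2) = p
    rw [Function.update_idem, ← hp.2, Function.update_eq_self]
  · intro p hp
    simp only [Finset.mem_filter] at hp
    obtain ⟨i, j⟩ := p
    have hij : i j = true := hp.2
    set i' : Fin n → Bool := Function.update i j false with hi'
    have hA : (∑ t ∈ Finset.univ.filter (fun t => t < j), sgn (i t))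
        = ∑ t ∈ Finset.univ.filter (fun t => t < j), sgn (i' t) := by
      refine Finset.sum_congr rfl fun t ht => ?_
      simp only [Finset.mem_filter] at ht
      rw [hi', Function.update_of_ne (ne_of_lt ht.2)]
    have hB : (∑ t ∈ Finset.univ.filter (fun t => j < t), sgn (i t))
        = ∑ t ∈ Finset.univ.filter (fun t => j < t), sgn (i' t) := by
      refine Finset.sum_congr rfl fun t ht => ?_
      simp only [Finset.mem_filter] at ht
      rw [hi', Function.update_of_ne (ne_of_gt ht.2)]
    have hrec : Function.update i' j true = i := by
      rw [hi', Function.update_idem, ← hij, Function.update_eq_self]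
    simp only [hrec]
    by_cases hbz : b i' = 0
    · simp [hbz]
    · have hw : wt i' = w := hbw i' hbz
      have hsplit := split_sum (fun t => sgn (i' t)) j
      have hij' : sgn (i' j) = -1 := by
        rw [hi']; simp [Function.update_self, sgn]
      rw [hij'] at hsplit
      have hwt : wt i' = ∑ t, sgn (i' t) := rfl
      rw [← hwt, hw] at hsplit
      set A := ∑ t ∈ Finset.univ.filter (fun t => t < j), sgn (i' t) with hAdef
      set B := ∑ t ∈ Finset.univ.filter (fun t => j < t), sgn (i' t) with hBdef
      have hAB : A = (w + 1) + (-B) := by omega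
      rw [hA, hAB, zpow_add₀ hv]
      ring
end
end

section
/- Let b, b' ∈ V^{⊗(m−1)} be weight vectors of weights i_b and i_{b'} respectively. Then: (a) ⟨Φ₁(b), Φ₁(b')⟩ = ⟨b, b'⟩; (b) if b is maximal then ⟨Φ₁(b), Φ₂(b')⟩ = 0; (c) if b is maximal and i_b > 0 and i_{b'} > 0 then ⟨Φ₂(b), Φ₂(b')⟩ = v [i_b][i_b + 1] ⟨b, b'⟩. -/
noncomputable section
attribute [local instance] Classical.propDecidable

variable {k : Type*} [Field k]

namespace Stmt11Aux

lemma qint_zero (v : k) : qint v 0 = 0 := by simp [qint, qintN]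

lemma qintN_succ_left (v : k) (hv : v ≠ 0) (a : ℕ) :
    v * qintN v (a + 1) = qintN v a + v ^ ((a : ℤ) + 1) := by
  unfold qintN
  rw [Finset.sum_range_succ', mul_add, Finset.mul_sum]
  congr 1
  · refine Finset.sum_congr rfl fun t _ => ?_
    rw [← zpow_one_add₀ hv]
    congr 1
    push_cast
    ring
  · rw [← zpow_one_add₀ hv]
    congr 1
    push_cast
    ring

lemma qintN_succ_right (v : k) (hv : v ≠ 0) (a : ℕ) :
    qintN v (a + 1) = v * qintN v a + v ^ (-(a : ℤ)) := by
  unfold qintN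
  rw [Finset.sum_range_succ, Finset.mul_sum]
  congr 1
  · refine Finset.sum_congr rfl fun t _ => ?_
    rw [← zpow_one_add₀ hv]
    congr 1
    push_cast
    ring
  · congr 1
    push_cast
    ring

lemma qint_rec (v : k) (hv : v ≠ 0) (m : ℤ) :
    v * qint v (m + 1) = qint v m + v ^ (m + 1) := by
  rcases le_or_gt 0 m with hm | hm
  · have h1 : qint v (m + 1) = qintN v (m.toNat + 1) := by
      unfold qint
      rw [if_pos (by omega)]
      congr 1
      omega
    have h2 : qint v m = qintN v m.toNat := by unfold qint; rw [if_pos hm]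
    rw [h1, h2, qintN_succ_left v hv]
    congr 2
    omega
  · set b : ℕ := (-(m + 1)).toNat with hb
    have h1 : qint v (m + 1) = -qintN v b := by
      unfold qint
      split_ifs with h
      · have h0 : m + 1 = 0 := by omega
        have hb0 : b = 0 := by omega
        rw [h0, hb0]
        simp [qintN]
      · rw [hb]
    have h2 : qint v m = -qintN v (b + 1) := by
      unfold qint
      rw [if_neg (by omega)]
      have : (-m).toNat = b + 1 := by omega
      rw [this]
    rw [h1, h2, qintN_succ_right v hv b]
    have h3 : v ^ (m + 1) = v ^ (-(b : ℤ)) := by congr 1; omega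
    rw [h3]
    ring

lemma qint_rec' (v : k) (hv : v ≠ 0) (m : ℤ) :
    v ^ (m + 1) * qint v (m + 1) = v ^ m * qint v m + v ^ (2 * m + 1) := by
  have h1 : v ^ (m + 1) = v ^ m * v := by rw [zpow_add₀ hv, zpow_one]
  have h2 : v ^ (2 * m + 1) = v ^ m * v ^ (m + 1) := by
    rw [← zpow_add₀ hv]; congr 1; ring
  rw [h1, mul_assoc, qint_rec v hv, h2]
  ring

end Stmt11Aux
namespace Stmt11Aux

lemma sgn_true : sgn true = 1 := rfl
lemma sgn_false : sgn false = -1 := rfl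

/-- Partial sum before position `j`. -/
def pA {n : ℕ} (i : Fin n → Bool) (j : Fin n) : ℤ :=
  ∑ t ∈ Finset.univ.filter (fun t => t < j), sgn (i t)

/-- Partial sum after position `j`. -/
def pB {n : ℕ} (i : Fin n → Bool) (j : Fin n) : ℤ :=
  ∑ t ∈ Finset.univ.filter (fun t => j < t), sgn (i t)

lemma Eop_apply (v : k) {n : ℕ} (f : Tn k n) (i : Fin n → Bool) :
    Eop v n f i = ∑ j ∈ Finset.univ.filter (fun j => i j = true),
      v ^ (pA i j) * f (Function.update i j false) := rfl

lemma Fop_apply (v : k) {n : ℕ} (f : Tn k n) (i : Fin n → Bool) :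
    Fop v n f i = ∑ j ∈ Finset.univ.filter (fun j => i j = false),
      v ^ (-(pB i j)) * f (Function.update i j true) := rfl

lemma sum_sgn_update {n : ℕ} (s : Finset (Fin n)) (i : Fin n → Bool) (j : Fin n) (c : Bool) :
    ∑ t ∈ s, sgn (Function.update i j c t)
      = (∑ t ∈ s, sgn (i t)) + if j ∈ s then sgn c - sgn (i j) else 0 := by
  by_cases hj : j ∈ s
  · rw [if_pos hj, ← Finset.add_sum_erase s _ hj,
      ← Finset.add_sum_erase s (fun t => sgn (i t)) hj]
    have he : ∑ t ∈ s.erase j, sgn (Function.update i j c t)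
        = ∑ t ∈ s.erase j, sgn (i t) :=
      Finset.sum_congr rfl fun t ht => by
        rw [Function.update_of_ne (Finset.ne_of_mem_erase ht)]
    rw [he, Function.update_self]
    ring
  · rw [if_neg hj, add_zero]
    refine Finset.sum_congr rfl fun t ht => ?_
    have htj : t ≠ j := fun h => hj (h ▸ ht)
    rw [Function.update_of_ne htj]

lemma pA_update {n : ℕ} (i : Fin n → Bool) (jpos jupd : Fin n) (c : Bool) :
    pA (Function.update i jupd c) jpos
      = pA i jpos + if jupd < jpos then sgn c - sgn (i jupd) else 0 := by
  unfold pA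
  rw [sum_sgn_update]
  simp only [Finset.mem_filter, Finset.mem_univ, true_and]

lemma pB_update {n : ℕ} (i : Fin n → Bool) (jpos jupd : Fin n) (c : Bool) :
    pB (Function.update i jupd c) jpos
      = pB i jpos + if jpos < jupd then sgn c - sgn (i jupd) else 0 := by
  unfold pB
  rw [sum_sgn_update]
  simp only [Finset.mem_filter, Finset.mem_univ, true_and]

lemma pA_update_self {n : ℕ} (i : Fin n → Bool) (j : Fin n) (c : Bool) :
    pA (Function.update i j c) j = pA i j := by
  rw [pA_update, if_neg (lt_irrefl j), add_zero]

lemma pB_update_self {n : ℕ} (i : Fin n → Bool) (j : Fin n) (c : Bool) :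
    pB (Function.update i j c) j = pB i j := by
  rw [pB_update, if_neg (lt_irrefl j), add_zero]

lemma wt_split {n : ℕ} (i : Fin n → Bool) (j : Fin n) :
    wt i = pA i j + sgn (i j) + pB i j := by
  unfold wt pA pB
  have key : ∀ t : Fin n, sgn (i t)
      = (if t < j then sgn (i t) else 0) + ((if t = j then sgn (i t) else 0)
        + (if j < t then sgn (i t) else 0)) := by
    intro t
    rcases lt_trichotomy t j with h | h | h
    · rw [if_pos h, if_neg h.ne, if_neg (asymm h)]; ring
    · rw [if_neg (by simp [h]), if_pos h, if_neg (by simp [h])]; ring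
    · rw [if_neg (asymm h), if_neg (ne_of_gt h), if_pos h]; ring
  rw [Finset.sum_congr rfl fun t _ => key t, Finset.sum_add_distrib, Finset.sum_add_distrib,
    ← Finset.sum_filter, ← Finset.sum_filter, ← Finset.sum_filter]
  have h2 : ∑ t ∈ Finset.univ.filter (fun t => t = j), sgn (i t) = sgn (i j) := by
    rw [Finset.filter_eq']
    simp
  rw [h2]
  ring

lemma update_update {n : ℕ} (i : Fin n → Bool) (j : Fin n) (c c' : Bool) (h : i j = c) :
    Function.update (Function.update i j c') j c = i := by
  rw [Function.update_idem, ← h, Function.update_eq_self]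

lemma filter_update_eq {n : ℕ} (i : Fin n → Bool) (j : Fin n) (c : Bool) :
    Finset.univ.filter (fun t => Function.update i j c t = c)
      = insert j (Finset.univ.filter (fun t => i t = c)) := by
  ext t
  simp only [Finset.mem_filter, Finset.mem_univ, true_and, Finset.mem_insert]
  rcases eq_or_ne t j with rfl | ht
  · simp
  · simp [Function.update_of_ne ht, ht]

end Stmt11Aux
namespace Stmt11Aux

lemma form_expand_right {n : ℕ} (c d : k) (z x y : Tn k n) :
    form z (c • x - d • y) = c * form z x - d * form z y := by
  unfold form
  calc ∑ i, z i * (c • x - d • y) i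
      = ∑ i, (c * (z i * x i) - d * (z i * y i)) :=
        Finset.sum_congr rfl fun i _ => by
          simp only [Pi.sub_apply, Pi.smul_apply, smul_eq_mul]; ring
    _ = c * (∑ i, z i * x i) - d * (∑ i, z i * y i) := by
        rw [Finset.sum_sub_distrib, ← Finset.mul_sum, ← Finset.mul_sum]

lemma form_expand {n : ℕ} (c1 d1 c2 d2 : k) (x1 y1 x2 y2 : Tn k n) :
    form (c1 • x1 - d1 • y1) (c2 • x2 - d2 • y2)
      = c1 * c2 * form x1 x2 - c1 * d2 * form x1 y2
        - d1 * c2 * form y1 x2 + d1 * d2 * form y1 y2 := by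
  unfold form
  calc ∑ i, (c1 • x1 - d1 • y1) i * (c2 • x2 - d2 • y2) i
      = ∑ i, (c1 * c2 * (x1 i * x2 i) - c1 * d2 * (x1 i * y2 i)
          - d1 * c2 * (y1 i * x2 i) + d1 * d2 * (y1 i * y2 i)) :=
        Finset.sum_congr rfl fun i _ => by
          simp only [Pi.sub_apply, Pi.smul_apply, smul_eq_mul]; ring
    _ = _ := by
        rw [Finset.sum_add_distrib, Finset.sum_sub_distrib, Finset.sum_sub_distrib,
          ← Finset.mul_sum, ← Finset.mul_sum, ← Finset.mul_sum, ← Finset.mul_sum]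

def snocEquiv (n : ℕ) : ((Fin n → Bool) × Bool) ≃ (Fin (n + 1) → Bool) where
  toFun := fun p => Fin.snoc p.1 p.2
  invFun := fun i => (fun t => i t.castSucc, i (Fin.last n))
  left_inv := fun p => by simp
  right_inv := fun i => by
    funext t
    refine Fin.lastCases ?_ ?_ t <;> simp

lemma form_tensY {n : ℕ} (c c' : Bool) (f g : Tn k n) :
    form (tensY c f) (tensY c' g) = if c = c' then form f g else 0 := by
  have hsum : form (tensY c f) (tensY c' g)
      = ∑ p : (Fin n → Bool) × Bool, tensY c f (snocEquiv n p) * tensY c' g (snocEquiv n p) :=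
    (Fintype.sum_equiv (snocEquiv n) _ _ (fun p => rfl)).symm
  rw [hsum]
  have hp : ∀ p : (Fin n → Bool) × Bool,
      tensY c f (snocEquiv n p) * tensY c' g (snocEquiv n p)
        = (if p.2 = c then f p.1 else 0) * (if p.2 = c' then g p.1 else 0) := by
    intro p
    unfold tensY snocEquiv
    simp only [Equiv.coe_fn_mk, Fin.snoc_last, Fin.snoc_castSucc]
  rw [Finset.sum_congr rfl fun p _ => hp p, Fintype.sum_prod_type]
  cases c <;> cases c' <;> simp [form]

end Stmt11Aux
namespace Stmt11Aux

lemma form_Fop (v : k) (hv : v ≠ 0) {n : ℕ} (f g : Tn k n) :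
    form f (Fop v n g) = ∑ i, v ^ (1 - wt i) * Eop v n f i * g i := by
  have key : ∀ j : Fin n,
      (∑ i ∈ Finset.univ.filter (fun i : Fin n → Bool => i j = false),
        f i * (v ^ (-(pB i j)) * g (Function.update i j true)))
      = ∑ i ∈ Finset.univ.filter (fun i : Fin n → Bool => i j = true),
        f (Function.update i j false) * (v ^ (-(pB i j)) * g i) := by
    intro j
    refine Finset.sum_nbij' (fun i => Function.update i j true)
      (fun i => Function.update i j false) ?_ ?_ ?_ ?_ ?_
    · intro a ha
      simp only [Finset.mem_filter, Finset.mem_univ, true_and] at *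
      rw [Function.update_self]
    · intro a ha
      simp only [Finset.mem_filter, Finset.mem_univ, true_and] at *
      rw [Function.update_self]
    · intro a ha
      simp only [Finset.mem_filter, Finset.mem_univ, true_and] at ha
      exact update_update a j false true ha
    · intro a ha
      simp only [Finset.mem_filter, Finset.mem_univ, true_and] at ha
      exact update_update a j true false ha
    · intro a ha
      simp only [Finset.mem_filter, Finset.mem_univ, true_and] at ha
      rw [update_update a j false true ha, pB_update_self]
  unfold form
  calc ∑ i, f i * Fop v n g i
      = ∑ i : Fin n → Bool, ∑ j : Fin n,
          (if i j = false then f i * (v ^ (-(pB i j)) * g (Function.update i j true)) else 0) := by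
        refine Finset.sum_congr rfl fun i _ => ?_
        rw [Fop_apply, Finset.mul_sum, Finset.sum_filter]
    _ = ∑ j : Fin n, ∑ i : Fin n → Bool,
          (if i j = false then f i * (v ^ (-(pB i j)) * g (Function.update i j true)) else 0) :=
        Finset.sum_comm
    _ = ∑ j : Fin n, ∑ i ∈ Finset.univ.filter (fun i : Fin n → Bool => i j = false),
          f i * (v ^ (-(pB i j)) * g (Function.update i j true)) :=
        Finset.sum_congr rfl fun j _ => (Finset.sum_filter _ _).symm
    _ = ∑ j : Fin n, ∑ i ∈ Finset.univ.filter (fun i : Fin n → Bool => i j = true),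
          f (Function.update i j false) * (v ^ (-(pB i j)) * g i) :=
        Finset.sum_congr rfl fun j _ => key j
    _ = ∑ j : Fin n, ∑ i : Fin n → Bool,
          (if i j = true then f (Function.update i j false) * (v ^ (-(pB i j)) * g i) else 0) :=
        Finset.sum_congr rfl fun j _ => Finset.sum_filter _ _
    _ = ∑ i : Fin n → Bool, ∑ j : Fin n,
          (if i j = true then f (Function.update i j false) * (v ^ (-(pB i j)) * g i) else 0) :=
        Finset.sum_comm
    _ = ∑ i : Fin n → Bool, ∑ j ∈ Finset.univ.filter (fun j : Fin n => i j = true),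
          f (Function.update i j false) * (v ^ (-(pB i j)) * g i) :=
        Finset.sum_congr rfl fun i _ => (Finset.sum_filter _ _).symm
    _ = ∑ i, v ^ (1 - wt i) * Eop v n f i * g i := by
        refine Finset.sum_congr rfl fun i _ => ?_
        rw [Eop_apply, Finset.mul_sum, Finset.sum_mul]
        refine Finset.sum_congr rfl fun j hj => ?_
        simp only [Finset.mem_filter, Finset.mem_univ, true_and] at hj
        have hw := wt_split i j
        rw [hj, sgn_true] at hw
        have hexp : -(pB i j) = (1 - wt i) + pA i j := by omega
        rw [hexp, zpow_add₀ hv]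
        ring

end Stmt11Aux
namespace Stmt11Aux

lemma Tclaim (v : k) (hv : v ≠ 0) : ∀ (n : ℕ) (i : Fin n → Bool),
    (∑ j, (if i j = true then v ^ (2 * pA i j + 1) else -v ^ (2 * pA i j - 1)))
      = v ^ (wt i) * qint v (wt i) := by
  intro n
  induction n with
  | zero =>
    intro i
    simp [wt, qint_zero]
  | succ n ih =>
    intro i
    rw [Fin.sum_univ_castSucc]
    have hA : ∀ j : Fin n, pA i (Fin.castSucc j) = pA (fun t => i (Fin.castSucc t)) j := by
      intro j
      unfold pA
      rw [Finset.sum_filter, Finset.sum_filter, Fin.sum_univ_castSucc,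
        if_neg (asymm (Fin.castSucc_lt_last j)), add_zero]
      exact Finset.sum_congr rfl fun t _ => by
        simp only [Fin.castSucc_lt_castSucc_iff]
    have hAlast : pA i (Fin.last n) = wt (fun t => i (Fin.castSucc t)) := by
      unfold pA wt
      rw [Finset.sum_filter, Fin.sum_univ_castSucc, if_neg (lt_irrefl _), add_zero]
      exact Finset.sum_congr rfl fun t _ => if_pos (Fin.castSucc_lt_last t)
    have hwt : wt i = wt (fun t => i (Fin.castSucc t)) + sgn (i (Fin.last n)) := by
      unfold wt
      rw [Fin.sum_univ_castSucc]
    have hsum : (∑ j : Fin n, (if i (Fin.castSucc j) = true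
          then v ^ (2 * pA i (Fin.castSucc j) + 1) else -v ^ (2 * pA i (Fin.castSucc j) - 1)))
        = v ^ (wt fun t => i (Fin.castSucc t)) * qint v (wt fun t => i (Fin.castSucc t)) := by
      rw [← ih (fun t => i (Fin.castSucc t))]
      exact Finset.sum_congr rfl fun j _ => by rw [hA j]
    rw [hsum, hAlast, hwt]
    set μ := wt (fun t => i (Fin.castSucc t)) with hμ
    cases hlast : i (Fin.last n)
    · rw [if_neg (by simp [hlast]), sgn_false]
      have h := qint_rec' v hv (μ - 1)
      rw [show μ - 1 + 1 = μ by ring, show 2 * (μ - 1) + 1 = 2 * μ - 1 by ring] at h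
      rw [show μ + (-1 : ℤ) = μ - 1 by ring]
      linear_combination h
    · rw [if_pos (by simp [hlast]), sgn_true]
      have h := qint_rec' v hv μ
      linear_combination -h

lemma telescope (v : k) (hv : v ≠ 0) {n : ℕ} (i : Fin n → Bool) :
    (∑ j ∈ Finset.univ.filter (fun j => i j = true), v ^ (pA i j - pB i j))
      - ∑ j ∈ Finset.univ.filter (fun j => i j = false), v ^ (pA i j - pB i j)
    = qint v (wt i) := by
  rw [Finset.sum_filter, Finset.sum_filter, ← Finset.sum_sub_distrib]
  have key : ∀ j : Fin n,
      ((if i j = true then v ^ (pA i j - pB i j) else 0)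
        - (if i j = false then v ^ (pA i j - pB i j) else 0))
      = v ^ (-wt i) * (if i j = true then v ^ (2 * pA i j + 1) else -v ^ (2 * pA i j - 1)) := by
    intro j
    have hw := wt_split i j
    cases hij : i j
    · rw [hij, sgn_false] at hw
      rw [if_neg (by simp [hij]), if_pos (by simp [hij]), if_neg (by simp [hij])]
      rw [show pA i j - pB i j = -wt i + (2 * pA i j - 1) by omega, zpow_add₀ hv]
      ring
    · rw [hij, sgn_true] at hw
      rw [if_pos (by simp [hij]), if_neg (by simp [hij]), if_pos (by simp [hij])]
      rw [show pA i j - pB i j = -wt i + (2 * pA i j + 1) by omega, zpow_add₀ hv]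
      ring
  rw [Finset.sum_congr rfl fun j _ => key j, ← Finset.mul_sum, Tclaim v hv n i,
    ← mul_assoc, ← zpow_add₀ hv]
  simp

end Stmt11Aux
namespace Stmt11Aux

lemma EF_comm (v : k) (hv : v ≠ 0) {n : ℕ} (f : Tn k n) (i : Fin n → Bool) :
    Eop v n (Fop v n f) i = Fop v n (Eop v n f) i + qint v (wt i) * f i := by
  have hEF : Eop v n (Fop v n f) i
      = (∑ j ∈ Finset.univ.filter (fun j => i j = true), v ^ (pA i j - pB i j)) * f i
        + ∑ j ∈ Finset.univ.filter (fun j : Fin n => i j = true),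
            ∑ j' ∈ Finset.univ.filter (fun j' : Fin n => i j' = false),
              v ^ (pA i j - pB i j' + (if j' < j then (2 : ℤ) else 0))
                * f (Function.update (Function.update i j false) j' true) := by
    rw [Eop_apply, Finset.sum_mul, ← Finset.sum_add_distrib]
    refine Finset.sum_congr rfl fun j hj => ?_
    have hij : i j = true := by simpa using hj
    rw [Fop_apply, filter_update_eq i j false, Finset.sum_insert (by simp [hij]), mul_add]
    congr 1
    · rw [update_update i j true false hij, pB_update_self, ← mul_assoc, ← zpow_add₀ hv,
        sub_eq_add_neg]
    · rw [Finset.mul_sum]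
      refine Finset.sum_congr rfl fun j' hj' => ?_
      have hij' : i j' = false := by simpa using hj'
      have hB : pB (Function.update i j false) j' = pB i j' + if j' < j then (-2 : ℤ) else 0 := by
        rw [pB_update, hij]
        norm_num [sgn_true, sgn_false]
      rw [hB, ← mul_assoc, ← zpow_add₀ hv]
      congr 2
      split_ifs <;> ring
  have hFE : Fop v n (Eop v n f) i
      = (∑ j ∈ Finset.univ.filter (fun j => i j = false), v ^ (pA i j - pB i j)) * f i
        + ∑ j' ∈ Finset.univ.filter (fun j' : Fin n => i j' = false),
            ∑ j ∈ Finset.univ.filter (fun j : Fin n => i j = true),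
              v ^ (pA i j - pB i j' + (if j' < j then (2 : ℤ) else 0))
                * f (Function.update (Function.update i j false) j' true) := by
    rw [Fop_apply, Finset.sum_mul, ← Finset.sum_add_distrib]
    refine Finset.sum_congr rfl fun j' hj' => ?_
    have hij' : i j' = false := by simpa using hj'
    rw [Eop_apply, filter_update_eq i j' true, Finset.sum_insert (by simp [hij']), mul_add]
    congr 1
    · rw [update_update i j' false true hij', pA_update_self, ← mul_assoc, ← zpow_add₀ hv]
      congr 2
      ring
    · rw [Finset.mul_sum]
      refine Finset.sum_congr rfl fun j hj => ?_
      have hij : i j = true := by simpa using hj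
      have hne : j' ≠ j := by
        intro h
        rw [h, hij] at hij'
        exact Bool.noConfusion hij'
      have hupd : Function.update (Function.update i j' true) j false
          = Function.update (Function.update i j false) j' true :=
        Function.update_comm hne true false i
      have hA : pA (Function.update i j' true) j = pA i j + if j' < j then (2 : ℤ) else 0 := by
        rw [pA_update, hij']
        norm_num [sgn_true, sgn_false]
      rw [hupd, hA, ← mul_assoc, ← zpow_add₀ hv]
      congr 2
      split_ifs <;> ring
  have hcomm : (∑ j' ∈ Finset.univ.filter (fun j' : Fin n => i j' = false),
        ∑ j ∈ Finset.univ.filter (fun j : Fin n => i j = true),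
          v ^ (pA i j - pB i j' + (if j' < j then (2 : ℤ) else 0))
            * f (Function.update (Function.update i j false) j' true))
      = ∑ j ∈ Finset.univ.filter (fun j : Fin n => i j = true),
          ∑ j' ∈ Finset.univ.filter (fun j' : Fin n => i j' = false),
            v ^ (pA i j - pB i j' + (if j' < j then (2 : ℤ) else 0))
              * f (Function.update (Function.update i j false) j' true) :=
    Finset.sum_comm
  rw [hEF, hFE, hcomm, ← telescope v hv i]
  ring

end Stmt11Aux
open Stmt11Aux in
/-- orthogonality relations between `Φ₁` and `Φ₂`. -/
theorem stmt_11 {k : Type*} [Field k] (v : k) (hv : v ≠ 0) (n : ℕ)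
    (b b' : Tn k n) (w w' : ℤ)
    (hb0 : b ≠ 0) (hbw : ∀ i, b i ≠ 0 → wt i = w)
    (hb'0 : b' ≠ 0) (hb'w : ∀ i, b' i ≠ 0 → wt i = w') :
    form (Phi1 b) (Phi1 b') = form b b' ∧
    (Eop v n b = 0 → form (Phi1 b) (Phi2 v w' b') = 0) ∧
    (Eop v n b = 0 → 0 < w → 0 < w' →
      form (Phi2 v w b) (Phi2 v w' b') = v * qint v w * qint v (w + 1) * form b b') := by
  refine ⟨?_, ?_, ?_⟩
  · have h := form_tensY (k := k) true true b b'
    rw [if_pos rfl] at h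
    exact h
  · intro hE
    have hE0 : ∀ i, Eop v n b i = 0 := fun i => by rw [hE]; rfl
    have e : form (Phi1 b) (Phi2 v w' b')
        = qint v w' * form (tensY true b) (tensY false b')
          - v ^ w' * form (tensY true b) (tensY true (Fop v n b')) :=
      form_expand_right _ _ _ _ _
    rw [e, form_tensY, form_tensY, form_Fop v hv]
    simp [hE0]
  · intro hE hw hw'
    have hE0 : ∀ i, Eop v n b i = 0 := fun i => by rw [hE]; rfl
    have hFF : form (Fop v n b) (Fop v n b')
        = (v ^ (1 - w) * qint v w) * form b b' := by
      rw [form_Fop v hv]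
      have hterm : ∀ i : Fin n → Bool,
          v ^ (1 - wt i) * Eop v n (Fop v n b) i * b' i
            = (v ^ (1 - w) * qint v w) * (b i * b' i) := by
        intro i
        rw [EF_comm v hv]
        have hz : Fop v n (Eop v n b) i = 0 := by rw [hE, map_zero]; rfl
        rw [hz, zero_add]
        by_cases hbi : b i = 0
        · rw [hbi]; ring
        · rw [hbw i hbi]; ring
      rw [Finset.sum_congr rfl fun i _ => hterm i, ← Finset.mul_sum]
      rfl
    have hmain : form (Phi2 v w b) (Phi2 v w' b')
        = qint v w * qint v w' * form b b' + v ^ (w' + 1) * qint v w * form b b' := by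
      have e1 : form (Phi2 v w b) (Phi2 v w' b')
          = qint v w * qint v w' * form (tensY false b) (tensY false b')
            - qint v w * v ^ w' * form (tensY false b) (tensY true (Fop v n b'))
            - v ^ w * qint v w' * form (tensY true (Fop v n b)) (tensY false b')
            + v ^ w * v ^ w' * form (tensY true (Fop v n b)) (tensY true (Fop v n b')) :=
        form_expand _ _ _ _ _ _ _ _
      have t1 : form (tensY false b) (tensY false b') = form b b' := by
        rw [form_tensY]; simp
      have t2 : form (tensY false b) (tensY true (Fop v n b')) = 0 := by
        rw [form_tensY]; simp
      have t3 : form (tensY true (Fop v n b)) (tensY false b') = 0 := by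
        rw [form_tensY]; simp
      have t4 : form (tensY true (Fop v n b)) (tensY true (Fop v n b'))
          = form (Fop v n b) (Fop v n b') := by
        rw [form_tensY]; simp
      rw [e1, t1, t2, t3, t4, hFF]
      have hpow : v ^ w * v ^ w' * v ^ (1 - w) = v ^ (w' + 1) := by
        rw [← zpow_add₀ hv, ← zpow_add₀ hv]; congr 1; ring
      linear_combination (qint v w * form b b') * hpow
    rw [hmain]
    by_cases hbb : form b b' = 0
    · rw [hbb]; ring
    · have hww : w = w' := by
        have hex : ∃ i, b i * b' i ≠ 0 := by
          by_contra hcon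
          push_neg at hcon
          exact hbb (Finset.sum_eq_zero fun i _ => hcon i)
        obtain ⟨i, hi⟩ := hex
        rw [← hbw i (left_ne_zero_of_mul hi), hb'w i (right_ne_zero_of_mul hi)]
      subst hww
      have hr := qint_rec v hv w
      linear_combination (-(qint v w * form b b')) * hr
end
end

section
/- For every 1-factor α of length n, the vector Ω(α) ∈ V^{⊗n} satisfies E Ω(α) = 0. If moreover [n]! ≠ 0 in k, then ⟨Ω(α), Ω(α)⟩ ≠ 0 for every 1-factor α of length n, ⟨Ω(α), Ω(β)⟩ = 0 for all distinct 1-factors α ≠ β of length n, and consequently the vectors Ω(α), as α ranges over the 1-factors of length n, are linearly independent over k. -/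
noncomputable section
attribute [local instance] Classical.propDecidable

variable {k : Type*} [Field k]

namespace S12
variable {k : Type*} [Field k]

lemma Eop_apply (v : k) (n : ℕ) (f : Tn k n) (i : Fin n → Bool) :
    Eop v n f i = ∑ j ∈ Finset.univ.filter (fun j => i j = true),
      v ^ (∑ t ∈ Finset.univ.filter (fun t => t < j), sgn (i t)) * f (Function.update i j false) := rfl

lemma Fop_apply (v : k) (n : ℕ) (f : Tn k n) (i : Fin n → Bool) :
    Fop v n f i = ∑ j ∈ Finset.univ.filter (fun j => i j = false),
      v ^ (-(∑ t ∈ Finset.univ.filter (fun t => j < t), sgn (i t))) * f (Function.update i j true) := rfl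

lemma Omega_succ (v : k) {n : ℕ} (α : Fin (n+1) → Bool) :
    Omega v (n+1) α = if α (Fin.last n) = true
      then Phi1 (Omega v n fun t => α t.castSucc)
      else Phi2 v (wt fun t => α t.castSucc) (Omega v n fun t => α t.castSucc) := rfl

/-! ### quantum integers -/

lemma qint_natCast (v : k) (m : ℕ) : qint v (m : ℤ) = qintN v m := by
  simp [qint]

lemma qintN_succ (v : k) (hv : v ≠ 0) (m : ℕ) :
    qintN v (m + 1) = v ^ (m : ℤ) + v⁻¹ * qintN v m := by
  unfold qintN
  rw [Finset.sum_range_succ', Finset.mul_sum]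
  have hs : ∀ t ∈ Finset.range m, v ^ (((m+1 : ℕ) : ℤ) - 1 - 2 * ((t+1 : ℕ) : ℤ))
      = v⁻¹ * v ^ ((m : ℤ) - 1 - 2 * (t : ℤ)) := by
    intro t _
    rw [show (((m+1 : ℕ) : ℤ) - 1 - 2 * ((t+1 : ℕ) : ℤ)) = (-1) + ((m:ℤ) - 1 - 2 * (t:ℤ)) by
      push_cast; ring, zpow_add₀ hv, zpow_neg_one]
  rw [Finset.sum_congr rfl hs]
  have h0 : v ^ (((m+1 : ℕ) : ℤ) - 1 - 2 * ((0 : ℕ) : ℤ)) = v ^ (m : ℤ) := by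
    congr 1; push_cast; ring
  rw [h0, add_comm]

lemma qintN_succ' (v : k) (hv : v ≠ 0) (m : ℕ) :
    qintN v (m + 1) = v ^ (-(m : ℤ)) + v * qintN v m := by
  unfold qintN
  rw [Finset.sum_range_succ, Finset.mul_sum]
  have hs : ∀ t ∈ Finset.range m, v ^ (((m+1 : ℕ) : ℤ) - 1 - 2 * (t : ℤ))
      = v * v ^ ((m : ℤ) - 1 - 2 * (t : ℤ)) := by
    intro t _
    rw [show (((m+1 : ℕ) : ℤ) - 1 - 2 * (t : ℤ)) = 1 + ((m:ℤ) - 1 - 2 * (t:ℤ)) by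
      push_cast; ring, zpow_add₀ hv, zpow_one]
  rw [Finset.sum_congr rfl hs]
  have h0 : v ^ (((m+1 : ℕ) : ℤ) - 1 - 2 * ((m : ℕ) : ℤ)) = v ^ (-(m : ℤ)) := by
    congr 1; push_cast; ring
  rw [h0, add_comm]

lemma qint_succ (v : k) (hv : v ≠ 0) (m : ℤ) :
    qint v (m + 1) = v ^ m + v⁻¹ * qint v m := by
  rcases le_or_gt 0 m with h | h
  · rw [qint, if_pos (by omega), qint, if_pos h]
    have h1 : (m + 1).toNat = m.toNat + 1 := by omega
    rw [h1, qintN_succ v hv]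
    congr 2
    omega
  · rcases eq_or_lt_of_le (by omega : m ≤ -1) with h1 | h1
    · subst h1
      have e1 : qint v ((-1 : ℤ) + 1) = 0 := by norm_num [qint, qintN]
      have e2 : qint v (-1 : ℤ) = -1 := by norm_num [qint, qintN]
      rw [e1, e2, zpow_neg_one]
      field_simp
      ring
    · have h2 : ¬ (0 ≤ m + 1) := by omega
      have h3 : ¬ (0 ≤ m) := by omega
      rw [qint, if_neg h2, qint, if_neg h3]
      have h4 : (-m).toNat = (-(m+1)).toNat + 1 := by omega
      rw [h4, qintN_succ' v hv]
      have h5 : (-((-(m+1)).toNat : ℤ)) = m + 1 := by omega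
      rw [h5]
      have h6 : v ^ (m + 1) = v * v ^ m := by
        rw [add_comm, zpow_add₀ hv, zpow_one]
      rw [h6]
      field_simp
      ring

lemma qint_pred (v : k) (hv : v ≠ 0) (m : ℤ) :
    qint v (m - 1) = v * qint v m - v ^ m := by
  have h := qint_succ v hv (m - 1)
  rw [sub_add_cancel] at h
  rw [h]
  have h6 : v ^ m = v * v ^ (m - 1) := by
    rw [show m = 1 + (m - 1) by ring, zpow_add₀ hv, zpow_one]
    ring_nf
  rw [mul_add, h6]
  field_simp
  ring


/-! ### index sums and snoc -/

variable {n : ℕ}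

lemma pref_snoc (i : Fin n → Bool) (b : Bool) (j : Fin n) :
    ∑ t ∈ Finset.univ.filter (fun t => t < j.castSucc), sgn ((Fin.snoc i b : Fin (n+1) → Bool) t)
      = ∑ t ∈ Finset.univ.filter (fun t => t < j), sgn (i t) := by
  rw [Finset.sum_filter, Finset.sum_filter, Fin.sum_univ_castSucc]
  have hlast : ¬ (Fin.last n < j.castSucc) := (Fin.castSucc_lt_last j).asymm
  simp [Fin.castSucc_lt_castSucc_iff, Fin.snoc_castSucc, hlast]

lemma pref_last (i : Fin n → Bool) (b : Bool) :
    ∑ t ∈ Finset.univ.filter (fun t => t < Fin.last n), sgn ((Fin.snoc i b : Fin (n+1) → Bool) t) = wt i := by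
  rw [Finset.sum_filter, Fin.sum_univ_castSucc]
  simp [Fin.castSucc_lt_last, Fin.snoc_castSucc, wt]

lemma suf_snoc (i : Fin n → Bool) (b : Bool) (j : Fin n) :
    ∑ t ∈ Finset.univ.filter (fun t => j.castSucc < t), sgn ((Fin.snoc i b : Fin (n+1) → Bool) t)
      = (∑ t ∈ Finset.univ.filter (fun t => j < t), sgn (i t)) + sgn b := by
  rw [Finset.sum_filter, Finset.sum_filter, Fin.sum_univ_castSucc]
  simp [Fin.castSucc_lt_castSucc_iff, Fin.snoc_castSucc, Fin.snoc_last, Fin.castSucc_lt_last]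

lemma suf_last (i : Fin n → Bool) (b : Bool) :
    ∑ t ∈ Finset.univ.filter (fun t => Fin.last n < t), sgn ((Fin.snoc i b : Fin (n+1) → Bool) t) = 0 := by
  have h : Finset.univ.filter (fun t : Fin (n+1) => Fin.last n < t) = ∅ := by
    ext t
    simp [not_lt.mpr (Fin.le_last t)]
  rw [h, Finset.sum_empty]

lemma wt_snoc (i : Fin n → Bool) (b : Bool) :
    wt (Fin.snoc i b : Fin (n+1) → Bool) = wt i + sgn b := by
  unfold wt
  rw [Fin.sum_univ_castSucc]
  simp [Fin.snoc_castSucc, Fin.snoc_last]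

lemma wt_init_last (α : Fin (n+1) → Bool) :
    wt α = wt (fun t => α t.castSucc) + sgn (α (Fin.last n)) := by
  unfold wt
  rw [Fin.sum_univ_castSucc]

lemma update_snoc_castSucc (i : Fin n → Bool) (b c : Bool) (j : Fin n) :
    Function.update (Fin.snoc i b : Fin (n+1) → Bool) j.castSucc c = (Fin.snoc (Function.update i j c) b : Fin (n+1) → Bool) := by
  funext t
  refine Fin.lastCases ?_ (fun t => ?_) t
  · rw [Function.update_of_ne (Fin.castSucc_lt_last j).ne', Fin.snoc_last, Fin.snoc_last]
  · rcases eq_or_ne t j with rfl | h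
    · rw [Function.update_self, Fin.snoc_castSucc, Function.update_self]
    · rw [Function.update_of_ne ((Fin.castSucc_injective n).ne h), Fin.snoc_castSucc,
        Fin.snoc_castSucc, Function.update_of_ne h]

lemma update_snoc_last (i : Fin n → Bool) (b c : Bool) :
    Function.update (Fin.snoc i b : Fin (n+1) → Bool) (Fin.last n) c = (Fin.snoc i c : Fin (n+1) → Bool) := by
  funext t
  refine Fin.lastCases ?_ (fun t => ?_) t
  · rw [Function.update_self, Fin.snoc_last]
  · rw [Function.update_of_ne (Fin.castSucc_lt_last t).ne, Fin.snoc_castSucc, Fin.snoc_castSucc]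

lemma pref_update (i : Fin n → Bool) (j : Fin n) (c : Bool) :
    ∑ t ∈ Finset.univ.filter (fun t => t < j), sgn (Function.update i j c t)
      = ∑ t ∈ Finset.univ.filter (fun t => t < j), sgn (i t) :=
  Finset.sum_congr rfl fun t ht => by
    rw [Function.update_of_ne (Finset.mem_filter.mp ht).2.ne]

lemma suf_update (i : Fin n → Bool) (j : Fin n) (c : Bool) :
    ∑ t ∈ Finset.univ.filter (fun t => j < t), sgn (Function.update i j c t)
      = ∑ t ∈ Finset.univ.filter (fun t => j < t), sgn (i t) :=
  Finset.sum_congr rfl fun t ht => by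
    rw [Function.update_of_ne (Finset.mem_filter.mp ht).2.ne']

lemma wt_update (i : Fin n → Bool) (j : Fin n) (c : Bool) :
    wt (Function.update i j c) = wt i - sgn (i j) + sgn c := by
  unfold wt
  have key : (fun t => sgn (Function.update i j c t))
      = Function.update (fun t => sgn (i t)) j (sgn c) := by
    funext t
    rcases eq_or_ne t j with rfl | h
    · simp
    · simp [Function.update_of_ne h]
  rw [key, Finset.sum_update_of_mem (Finset.mem_univ j),
    Finset.sum_sdiff_eq_sub (Finset.singleton_subset_iff.mpr (Finset.mem_univ j)),
    Finset.sum_singleton]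
  ring

lemma pref_add_suf (i : Fin n → Bool) (j : Fin n) :
    (∑ t ∈ Finset.univ.filter (fun t => t < j), sgn (i t)) + sgn (i j)
      + (∑ t ∈ Finset.univ.filter (fun t => j < t), sgn (i t)) = wt i := by
  rw [Finset.sum_filter, Finset.sum_filter]
  have hj : sgn (i j) = ∑ t, if t = j then sgn (i t) else 0 := by
    rw [Finset.sum_ite_eq' Finset.univ j]
    simp
  rw [hj, ← Finset.sum_add_distrib, ← Finset.sum_add_distrib]
  unfold wt
  refine Finset.sum_congr rfl fun t _ => ?_
  rcases lt_trichotomy t j with h | rfl | h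
  · simp [h, h.ne, h.asymm]
  · simp
  · simp [h, h.ne', h.asymm]

lemma wt_le (i : Fin n → Bool) : wt i ≤ n := by
  unfold wt
  calc ∑ t, sgn (i t) ≤ ∑ _t : Fin n, 1 :=
        Finset.sum_le_sum fun t _ => by unfold sgn; split <;> omega
    _ = n := by simp

/-! ### snoc decompositions of the operators -/

lemma Tn_ext {f g : Tn k (n+1)}
    (h : ∀ (i : Fin n → Bool) (b : Bool), f (Fin.snoc i b) = g (Fin.snoc i b)) : f = g := by
  funext i
  have := h (Fin.init i) (i (Fin.last n))
  rwa [Fin.snoc_init_self] at this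

lemma Eop_snoc (v : k) (f : Tn k (n+1)) (i : Fin n → Bool) (b : Bool) :
    Eop v (n+1) f (Fin.snoc i b)
      = Eop v n (fun j => f (Fin.snoc j b)) i
        + (if b = true then v ^ (wt i) * f (Fin.snoc i false) else 0) := by
  rw [Eop_apply, Eop_apply, Finset.sum_filter, Finset.sum_filter, Fin.sum_univ_castSucc]
  congr 1
  · refine Finset.sum_congr rfl fun j _ => ?_
    rw [Fin.snoc_castSucc]
    split_ifs with h
    · rw [pref_snoc, update_snoc_castSucc]
    · rfl
  · rw [Fin.snoc_last]
    split_ifs with h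
    · rw [pref_last, update_snoc_last]
    · rfl

lemma Fop_snoc (v : k) (hv : v ≠ 0) (f : Tn k (n+1)) (i : Fin n → Bool) (b : Bool) :
    Fop v (n+1) f (Fin.snoc i b)
      = v ^ (-(sgn b)) * Fop v n (fun j => f (Fin.snoc j b)) i
        + (if b = false then f (Fin.snoc i true) else 0) := by
  rw [Fop_apply, Fop_apply, Finset.sum_filter, Finset.sum_filter, Fin.sum_univ_castSucc,
    Finset.mul_sum]
  congr 1
  · refine Finset.sum_congr rfl fun j _ => ?_
    rw [Fin.snoc_castSucc, mul_ite, mul_zero]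
    split_ifs with h
    · rw [suf_snoc, update_snoc_castSucc, neg_add, zpow_add₀ hv]
      ring
    · rfl
  · rw [Fin.snoc_last]
    split_ifs with h
    · rw [suf_last, update_snoc_last, neg_zero, zpow_zero, one_mul]
    · rfl

/-! ### tensY -/

lemma tensY_snoc (c : Bool) (f : Tn k n) (i : Fin n → Bool) (b : Bool) :
    tensY c f (Fin.snoc i b) = if b = c then f i else 0 := by
  simp only [tensY, Fin.snoc_last, Fin.snoc_castSucc]

lemma tensY_zero (c : Bool) : tensY c (0 : Tn k n) = 0 := by
  funext i
  simp [tensY]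

lemma tensY_smul (c : Bool) (a : k) (f : Tn k n) :
    tensY c (a • f) = a • tensY c f := by
  funext i
  simp only [tensY, Pi.smul_apply, smul_eq_mul, mul_ite, mul_zero]

/-! ### weight supports -/

def SuppW (w : ℤ) (f : Tn k n) : Prop := ∀ i, f i ≠ 0 → wt i = w

lemma suppW_congr {w w' : ℤ} {f : Tn k n} (h : w = w') (hf : SuppW w f) : SuppW w' f :=
  h ▸ hf

lemma suppW_smul {w : ℤ} {f : Tn k n} (a : k) (hf : SuppW w f) : SuppW w (a • f) := by
  intro i hi
  refine hf i fun h => hi ?_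
  simp [h]

lemma suppW_sub {w : ℤ} {f g : Tn k n} (hf : SuppW w f) (hg : SuppW w g) :
    SuppW w (f - g) := by
  intro i hi
  by_cases h : f i = 0
  · refine hg i fun h2 => hi ?_
    simp [Pi.sub_apply, h, h2]
  · exact hf i h

lemma suppW_tensY {w : ℤ} {f : Tn k n} (hf : SuppW w f) (c : Bool) :
    SuppW (w + sgn c) (tensY c f) := by
  intro i hi
  rw [← Fin.snoc_init_self i] at hi ⊢
  rw [tensY_snoc] at hi
  rw [wt_snoc]
  split_ifs at hi with h
  · rw [h, hf _ hi]
  · exact absurd rfl hi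

lemma suppW_Fop (v : k) {w : ℤ} {f : Tn k n} (hf : SuppW w f) :
    SuppW (w - 2) (Fop v n f) := by
  intro i hi
  rw [Fop_apply] at hi
  obtain ⟨j, hj, hne⟩ := Finset.exists_ne_zero_of_sum_ne_zero hi
  have hfi : f (Function.update i j true) ≠ 0 := right_ne_zero_of_mul hne
  have hij : i j = false := (Finset.mem_filter.mp hj).2
  have hw := hf _ hfi
  rw [wt_update, hij] at hw
  norm_num [sgn] at hw
  omega

lemma Fop_wtSmul (v : k) (g : Tn k n) (i : Fin n → Bool) :
    Fop v n (fun j => v ^ (wt j) * g j) i = v ^ (wt i + 2) * Fop v n g i := by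
  rw [Fop_apply, Fop_apply, Finset.mul_sum]
  refine Finset.sum_congr rfl fun j hj => ?_
  have hij : i j = false := (Finset.mem_filter.mp hj).2
  have hw : wt (Function.update i j true) = wt i + 2 := by
    rw [wt_update, hij]
    norm_num [sgn]
    ring
  rw [hw]
  ring

/-! ### E and F on tensY -/

lemma Eop_tensY_true (v : k) (g : Tn k n) :
    Eop v (n+1) (tensY true g) = tensY true (Eop v n g) := by
  apply Tn_ext
  intro i b
  rw [Eop_snoc]
  cases b
  · have h1 : (fun j => tensY true g (Fin.snoc j false)) = (0 : Tn k n) := by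
      funext j
      rw [tensY_snoc]
      simp
    rw [h1, map_zero]
    simp [tensY_snoc]
  · have h1 : (fun j => tensY true g (Fin.snoc j true)) = g := by
      funext j
      rw [tensY_snoc, if_pos rfl]
    rw [h1]
    simp [tensY_snoc]

lemma Eop_tensY_false (v : k) {w : ℤ} {g : Tn k n} (hg : SuppW w g) :
    Eop v (n+1) (tensY false g) = tensY false (Eop v n g) + v ^ w • tensY true g := by
  apply Tn_ext
  intro i b
  rw [Eop_snoc]
  cases b
  · have h1 : (fun j => tensY false g (Fin.snoc j false)) = g := by
      funext j
      rw [tensY_snoc, if_pos rfl]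
    rw [h1]
    simp [tensY_snoc]
  · have h1 : (fun j => tensY false g (Fin.snoc j true)) = (0 : Tn k n) := by
      funext j
      rw [tensY_snoc]
      simp
    rw [h1, map_zero]
    by_cases hgi : g i = 0
    · simp [tensY_snoc, hgi]
    · simp [tensY_snoc, hg i hgi]

lemma Fop_tensY_true (v : k) (hv : v ≠ 0) (g : Tn k n) :
    Fop v (n+1) (tensY true g) = v⁻¹ • tensY true (Fop v n g) + tensY false g := by
  apply Tn_ext
  intro i b
  rw [Fop_snoc v hv]
  cases b
  · have h1 : (fun j => tensY true g (Fin.snoc j false)) = (0 : Tn k n) := by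
      funext j
      rw [tensY_snoc]
      simp
    rw [h1, map_zero]
    simp [tensY_snoc]
  · have h1 : (fun j => tensY true g (Fin.snoc j true)) = g := by
      funext j
      rw [tensY_snoc, if_pos rfl]
    rw [h1]
    norm_num [tensY_snoc, sgn, zpow_neg_one]

lemma Fop_tensY_false (v : k) (hv : v ≠ 0) (g : Tn k n) :
    Fop v (n+1) (tensY false g) = v • tensY false (Fop v n g) := by
  apply Tn_ext
  intro i b
  rw [Fop_snoc v hv]
  cases b
  · have h1 : (fun j => tensY false g (Fin.snoc j false)) = g := by
      funext j
      rw [tensY_snoc, if_pos rfl]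
    rw [h1]
    norm_num [tensY_snoc, sgn]
  · have h1 : (fun j => tensY false g (Fin.snoc j true)) = (0 : Tn k n) := by
      funext j
      rw [tensY_snoc]
      simp
    rw [h1, map_zero]
    simp [tensY_snoc]

/-! ### the commutator -/

lemma comm_EF (v : k) (hv : v ≠ 0) :
    ∀ (n : ℕ) (f : Tn k n) (i : Fin n → Bool),
      Eop v n (Fop v n f) i = Fop v n (Eop v n f) i + qint v (wt i) * f i
  | 0, f, i => by
      have h0 : wt i = 0 := by simp [wt]
      have hq : qint v (0 : ℤ) = 0 := by norm_num [qint, qintN]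
      rw [Eop_apply, Fop_apply, h0, hq]
      simp
  | n+1, f, i => by
      obtain ⟨i', b, rfl⟩ : ∃ i' b, i = Fin.snoc i' b :=
        ⟨Fin.init i, i (Fin.last n), (Fin.snoc_init_self i).symm⟩
      have IH := comm_EF v hv n
      cases b
      · -- last entry is false (−1)
        have hff : (fun j => Fop v (n+1) f (Fin.snoc j false))
            = v • Fop v n (fun j => f (Fin.snoc j false)) + (fun j => f (Fin.snoc j true)) := by
          funext j
          rw [Fop_snoc v hv]
          norm_num [sgn]
        have hef : (fun j => Eop v (n+1) f (Fin.snoc j false))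
            = Eop v n (fun j => f (Fin.snoc j false)) := by
          funext j
          rw [Eop_snoc]
          simp
        rw [Eop_snoc, if_neg (by simp : ¬ (false = true))]
        rw [Fop_snoc v hv (Eop v (n+1) f) i' false, if_pos rfl]
        rw [hff, map_add, map_smul, hef, Eop_snoc, if_pos rfl, wt_snoc]
        simp only [Pi.add_apply, Pi.smul_apply, smul_eq_mul]
        rw [IH]
        have hq := qint_pred v hv (wt i')
        norm_num [sgn]
        rw [show wt i' + -1 = wt i' - 1 by ring, hq]
        ring
      · -- last entry is true (+1)
        have hft : (fun j => Fop v (n+1) f (Fin.snoc j true))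
            = v⁻¹ • Fop v n (fun j => f (Fin.snoc j true)) := by
          funext j
          rw [Fop_snoc v hv]
          norm_num [sgn, zpow_neg_one]
        have het : (fun j => Eop v (n+1) f (Fin.snoc j true))
            = Eop v n (fun j => f (Fin.snoc j true))
              + (fun j => v ^ (wt j) * f (Fin.snoc j false)) := by
          funext j
          rw [Eop_snoc]
          simp
        rw [Eop_snoc, if_pos rfl]
        rw [Fop_snoc v hv f i' false, if_pos rfl]
        rw [Fop_snoc v hv (Eop v (n+1) f) i' true, if_neg (by simp : ¬ (true = false))]
        rw [hft, map_smul, het, map_add, wt_snoc]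
        simp only [Pi.add_apply, Pi.smul_apply, smul_eq_mul]
        rw [Fop_wtSmul, IH]
        have hq := qint_succ v hv (wt i')
        norm_num [sgn, zpow_neg_one]
        rw [hq]
        have hp2 : v ^ (wt i' + 2) = v ^ (wt i') * v * v := by
          rw [show wt i' + 2 = wt i' + 1 + 1 by ring, zpow_add_one₀ hv, zpow_add_one₀ hv]
        rw [hp2]
        field_simp
        ring

/-! ### the bilinear form -/

lemma form_comm (f g : Tn k n) : form f g = form g f :=
  Finset.sum_congr rfl fun i _ => mul_comm _ _

lemma form_zero_left (g : Tn k n) : form (0 : Tn k n) g = 0 := by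
  unfold form
  simp

lemma form_smul_left (c : k) (f g : Tn k n) : form (c • f) g = c * form f g := by
  unfold form
  rw [Finset.mul_sum]
  exact Finset.sum_congr rfl fun i _ => by simp [mul_assoc]

lemma form_smul_right (c : k) (f g : Tn k n) : form f (c • g) = c * form f g := by
  rw [form_comm, form_smul_left, form_comm]

lemma form_sub_left (f g h : Tn k n) : form (f - g) h = form f h - form g h := by
  unfold form
  rw [← Finset.sum_sub_distrib]
  exact Finset.sum_congr rfl fun i _ => by simp [sub_mul]

lemma form_sub_right (f g h : Tn k n) : form f (g - h) = form f g - form f h := by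
  rw [form_comm, form_sub_left, form_comm f g, form_comm f h]

lemma form_sum_left {ι : Type*} (s : Finset ι) (F : ι → Tn k n) (g : Tn k n) :
    form (∑ a ∈ s, F a) g = ∑ a ∈ s, form (F a) g := by
  unfold form
  rw [Finset.sum_comm]
  exact Finset.sum_congr rfl fun i _ => by rw [Finset.sum_apply, Finset.sum_mul]

def snocEquiv (n : ℕ) : (Fin n → Bool) × Bool ≃ (Fin (n+1) → Bool) where
  toFun p := Fin.snoc p.1 p.2
  invFun f := (Fin.init f, f (Fin.last n))
  left_inv p := by simp [Fin.init_snoc, Fin.snoc_last]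
  right_inv f := Fin.snoc_init_self f

lemma form_snoc (f g : Tn k (n+1)) :
    form f g = ∑ i : Fin n → Bool,
      (f (Fin.snoc i false) * g (Fin.snoc i false)
        + f (Fin.snoc i true) * g (Fin.snoc i true)) := by
  unfold form
  rw [← Equiv.sum_comp (snocEquiv n) (fun i => f i * g i), Fintype.sum_prod_type]
  refine Finset.sum_congr rfl fun i _ => ?_
  rw [Fintype.sum_bool]
  simp only [snocEquiv, Equiv.coe_fn_mk]
  ring

lemma form_tensY (a b : Bool) (f g : Tn k n) :
    form (tensY a f) (tensY b g) = if a = b then form f g else 0 := by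
  rw [form_snoc]
  unfold form
  cases a <;> cases b <;> simp [tensY_snoc]

/-! ### adjointness -/

lemma adjoint (v : k) (hv : v ≠ 0) {w : ℤ} {f : Tn k n} (hf : SuppW w f) (g : Tn k n) :
    form (Eop v n f) g = v ^ (w + 1) * form f (Fop v n g) := by
  have hL : form (Eop v n f) g
      = ∑ p : (Fin n → Bool) × Fin n, (if p.1 p.2 = true then
          v ^ (∑ t ∈ Finset.univ.filter (fun t => t < p.2), sgn (p.1 t)) *
            f (Function.update p.1 p.2 false) * g p.1 else 0) := by
    unfold form
    rw [Fintype.sum_prod_type]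
    refine Finset.sum_congr rfl fun i _ => ?_
    rw [Eop_apply, Finset.sum_mul, Finset.sum_filter]
  have hR : v ^ (w + 1) * form f (Fop v n g)
      = ∑ p : (Fin n → Bool) × Fin n, (if p.1 p.2 = false then
          v ^ (w + 1) * (f p.1 *
            (v ^ (-(∑ t ∈ Finset.univ.filter (fun t => p.2 < t), sgn (p.1 t))) *
              g (Function.update p.1 p.2 true))) else 0) := by
    unfold form
    rw [Finset.mul_sum, Fintype.sum_prod_type]
    refine Finset.sum_congr rfl fun i _ => ?_
    rw [Fop_apply, Finset.mul_sum, Finset.mul_sum, Finset.sum_filter]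
  set φ : ((Fin n → Bool) × Fin n) → ((Fin n → Bool) × Fin n) :=
    fun p => (Function.update p.1 p.2 (!(p.1 p.2)), p.2) with hφdef
  have hinv : Function.Involutive φ := by
    intro p
    simp only [hφdef, Function.update_self, Function.update_idem, Bool.not_not]
    rw [Function.update_eq_self]
  rw [hL, hR]
  refine Fintype.sum_bijective φ hinv.bijective _ _ fun p => ?_
  obtain ⟨i, j⟩ := p
  simp only [hφdef]
  cases hij : i j
  · rw [if_neg (by simp), if_neg (by simp [Function.update_self])]
  · rw [if_pos rfl]
    simp only [Bool.not_true]
    rw [if_pos (by rw [Function.update_self])]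
    have hupd : Function.update (Function.update i j false) j true = i := by
      rw [Function.update_idem, show true = i j from hij.symm, Function.update_eq_self]
    rw [hupd, suf_update i j false]
    by_cases hf0 : f (Function.update i j false) = 0
    · rw [hf0]
      ring
    · have hw : wt (Function.update i j false) = w := hf _ hf0
      have hsum := pref_add_suf (Function.update i j false) j
      rw [Function.update_self, hw, pref_update, suf_update,
        show sgn false = -1 from rfl] at hsum
      have hpow : v ^ (∑ t ∈ Finset.univ.filter (fun t => t < j), sgn (i t))
          = v ^ (w + 1) *
            v ^ (-(∑ t ∈ Finset.univ.filter (fun t => j < t), sgn (i t))) := by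
        rw [← zpow_add₀ hv]
        congr 1
        linarith
      rw [hpow]
      ring

/-! ### maximality and form values on Phi -/

lemma form_Fop_right (v : k) (hv : v ≠ 0) {w : ℤ} {f : Tn k n}
    (hEf : Eop v n f = 0) (hf : SuppW w f) (g : Tn k n) :
    form f (Fop v n g) = 0 := by
  have h := adjoint v hv hf g
  rw [hEf, form_zero_left] at h
  have hz : v ^ (w + 1) ≠ 0 := zpow_ne_zero _ hv
  field_simp at h
  exact (mul_eq_zero.mp h.symm).resolve_left hz

lemma EF_of_max (v : k) (hv : v ≠ 0) {w : ℤ} {f : Tn k n}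
    (hEf : Eop v n f = 0) (hf : SuppW w f) :
    Eop v n (Fop v n f) = qint v w • f := by
  funext i
  rw [comm_EF v hv n f i, hEf, map_zero, Pi.zero_apply, zero_add, Pi.smul_apply, smul_eq_mul]
  by_cases h : f i = 0
  · rw [h, mul_zero, mul_zero]
  · rw [hf i h]

lemma suppW_Omega (v : k) : ∀ (n : ℕ) (α : Fin n → Bool), SuppW (wt α) (Omega v n α)
  | 0, α => by
      intro i _
      have h1 : wt i = 0 := by simp [wt]
      have h2 : wt α = 0 := by simp [wt]
      rw [h1, h2]
  | n+1, α => by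
      have IH := suppW_Omega v n (fun t => α t.castSucc)
      rw [Omega_succ]
      have hwt := wt_init_last α
      by_cases h : α (Fin.last n) = true
      · rw [if_pos h]
        refine suppW_congr ?_ (suppW_tensY IH true)
        rw [hwt, h]
      · rw [if_neg h]
        have hb : α (Fin.last n) = false := by
          revert h
          cases α (Fin.last n) <;> simp
        unfold Phi2
        apply suppW_sub
        · refine suppW_smul _ (suppW_congr ?_ (suppW_tensY IH false))
          rw [hwt, hb]
        · refine suppW_smul _ (suppW_congr ?_ (suppW_tensY (suppW_Fop v IH) true))
          rw [hwt, hb]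
          norm_num [sgn]
          ring

lemma Eop_Omega (v : k) (hv : v ≠ 0) :
    ∀ (n : ℕ) (α : Fin n → Bool), Eop v n (Omega v n α) = 0
  | 0, α => by
      funext i
      rw [Eop_apply]
      simp
  | n+1, α => by
      have IH := Eop_Omega v hv n (fun t => α t.castSucc)
      have hsupp := suppW_Omega v n (fun t => α t.castSucc)
      rw [Omega_succ]
      split_ifs with h
      · show Eop v (n+1) (tensY true _) = 0
        rw [Eop_tensY_true, IH, tensY_zero]
      · show Eop v (n+1) (_ • tensY false _ - _ • tensY true (Fop v n _)) = 0
        rw [map_sub, map_smul, map_smul, Eop_tensY_false v hsupp, Eop_tensY_true,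
          IH, tensY_zero, zero_add, EF_of_max v hv IH hsupp, tensY_smul]
        rw [smul_comm]
        simp

lemma form_Phi1_Phi1 (f g : Tn k n) : form (Phi1 f) (Phi1 g) = form f g := by
  show form (tensY true f) (tensY true g) = form f g
  rw [form_tensY, if_pos rfl]

lemma form_Phi1_Phi2 (v : k) (hv : v ≠ 0) {wf : ℤ} {f : Tn k n} (w' : ℤ) (g : Tn k n)
    (hEf : Eop v n f = 0) (hf : SuppW wf f) :
    form (Phi1 f) (Phi2 v w' g) = 0 := by
  show form (tensY true f) (qint v w' • tensY false g - v ^ w' • tensY true (Fop v n g)) = 0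
  rw [form_sub_right, form_smul_right, form_smul_right, form_tensY, form_tensY,
    if_neg (by simp), if_pos rfl, form_Fop_right v hv hEf hf g]
  ring

lemma form_Phi2_Phi1 (v : k) (hv : v ≠ 0) {wg : ℤ} (w : ℤ) (f : Tn k n) {g : Tn k n}
    (hEg : Eop v n g = 0) (hg : SuppW wg g) :
    form (Phi2 v w f) (Phi1 g) = 0 := by
  show form (qint v w • tensY false f - v ^ w • tensY true (Fop v n f)) (tensY true g) = 0
  rw [form_sub_left, form_smul_left, form_smul_left, form_tensY, form_tensY,
    if_neg (by simp), if_pos rfl, form_comm, form_Fop_right v hv hEg hg f]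
  ring

lemma form_Fop_Fop (v : k) (hv : v ≠ 0) {w : ℤ} {f : Tn k n}
    (hEf : Eop v n f = 0) (hf : SuppW w f) (g : Tn k n) :
    form (Fop v n f) (Fop v n g) = v ^ (1 - w) * (qint v w * form f g) := by
  have h1 := adjoint v hv (suppW_Fop v hf) g
  rw [EF_of_max v hv hEf hf, form_smul_left] at h1
  have h2 : v ^ (1 - w) * v ^ (w - 2 + 1) = 1 := by
    rw [← zpow_add₀ hv, show (1 - w) + (w - 2 + 1) = 0 by ring, zpow_zero]
  calc form (Fop v n f) (Fop v n g)
      = v ^ (1 - w) * v ^ (w - 2 + 1) * form (Fop v n f) (Fop v n g) := by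
        rw [h2, one_mul]
    _ = v ^ (1 - w) * (qint v w * form f g) := by rw [mul_assoc, ← h1]

lemma form_Phi2_Phi2 (v : k) (hv : v ≠ 0) {w w' : ℤ} {f : Tn k n} (g : Tn k n)
    (hEf : Eop v n f = 0) (hf : SuppW w f) :
    form (Phi2 v w f) (Phi2 v w' g)
      = qint v w * (qint v w' + v ^ (w' + 1)) * form f g := by
  show form (qint v w • tensY false f - v ^ w • tensY true (Fop v n f))
      (qint v w' • tensY false g - v ^ w' • tensY true (Fop v n g)) = _
  simp only [form_sub_left, form_sub_right, form_smul_left, form_smul_right, form_tensY,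
    Bool.false_eq_true, Bool.true_eq_false, if_true, if_false, mul_zero, sub_zero, zero_sub,
    if_pos rfl]
  rw [form_Fop_Fop v hv hEf hf g]
  have hpow : v ^ w * (v ^ w' * v ^ (1 - w)) = v ^ (w' + 1) := by
    rw [← zpow_add₀ hv, ← zpow_add₀ hv]
    congr 1
    ring
  linear_combination (qint v w * form f g) * hpow

/-! ### orthogonality and norms of the Omega vectors -/

lemma form_Omega_ne (v : k) (hv : v ≠ 0) :
    ∀ (n : ℕ) (α β : Fin n → Bool), α ≠ β →
      form (Omega v n α) (Omega v n β) = 0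
  | 0, α, β, hne => absurd (Subsingleton.elim α β) hne
  | n+1, α, β, hne => by
      have hEα := Eop_Omega v hv n (fun t => α t.castSucc)
      have hEβ := Eop_Omega v hv n (fun t => β t.castSucc)
      have hsα := suppW_Omega v n (fun t => α t.castSucc)
      have hsβ := suppW_Omega v n (fun t => β t.castSucc)
      rw [Omega_succ, Omega_succ]
      by_cases hab : α (Fin.last n) = β (Fin.last n)
      · have hαβ' : (fun t : Fin n => α t.castSucc) ≠ (fun t : Fin n => β t.castSucc) := by
          intro hc
          apply hne
          funext t
          refine Fin.lastCases hab (fun t => ?_) t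
          exact congrFun hc t
        have IH := form_Omega_ne v hv n _ _ hαβ'
        by_cases h : α (Fin.last n) = true
        · rw [if_pos h, if_pos (hab ▸ h), form_Phi1_Phi1, IH]
        · rw [if_neg h, if_neg (hab ▸ h), form_Phi2_Phi2 v hv _ hEα hsα, IH, mul_zero]
      · by_cases h : α (Fin.last n) = true
        · have hb : ¬ (β (Fin.last n) = true) := fun hc => hab (h.trans hc.symm)
          rw [if_pos h, if_neg hb]
          exact form_Phi1_Phi2 v hv _ _ hEα hsα
        · have hb : β (Fin.last n) = true := by
            revert h hab
            cases α (Fin.last n) <;> cases β (Fin.last n) <;> simp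
          rw [if_neg h, if_pos hb]
          exact form_Phi2_Phi1 v hv _ _ hEβ hsβ

lemma isOneFactor_init {α : Fin (n+1) → Bool} (h : IsOneFactor α) :
    IsOneFactor (fun t : Fin n => α t.castSucc) := by
  intro j
  have h2 := h j.castSucc
  have key : ∑ t ∈ Finset.univ.filter (fun t => t ≤ j.castSucc), sgn (α t)
      = ∑ t ∈ Finset.univ.filter (fun t => t ≤ j), sgn (α t.castSucc) := by
    rw [Finset.sum_filter, Finset.sum_filter, Fin.sum_univ_castSucc]
    have hlast : ¬ (Fin.last n ≤ j.castSucc) := not_le.mpr (Fin.castSucc_lt_last j)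
    simp [Fin.castSucc_le_castSucc_iff, hlast]
  rw [key] at h2
  exact h2

lemma wt_init_pos {α : Fin (n+1) → Bool} (h : IsOneFactor α)
    (hl : α (Fin.last n) = false) : 1 ≤ wt (fun t : Fin n => α t.castSucc) := by
  have h2 := h (Fin.last n)
  have huniv : Finset.univ.filter (fun t : Fin (n+1) => t ≤ Fin.last n) = Finset.univ := by
    ext t
    simp [Fin.le_last t]
  rw [huniv] at h2
  have h3 := wt_init_last α
  rw [hl, show sgn false = -1 from rfl] at h3
  have h4 : wt α = ∑ t, sgn (α t) := rfl
  rw [h4] at h3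
  linarith

lemma form_Omega_0 (v : k) (α : Fin 0 → Bool) :
    form (Omega v 0 α) (Omega v 0 α) = 1 := by
  unfold form Omega
  simp

lemma form_Omega_self_ne (v : k) (hv : v ≠ 0) :
    ∀ (n : ℕ) (α : Fin n → Bool), IsOneFactor α →
      (∀ s : ℕ, 1 ≤ s → s ≤ n → qintN v s ≠ 0) →
      form (Omega v n α) (Omega v n α) ≠ 0
  | 0, α, _, _ => by
      rw [form_Omega_0]
      exact one_ne_zero
  | n+1, α, hof, hq => by
      have hof' := isOneFactor_init hof
      have IH := form_Omega_self_ne v hv n (fun t => α t.castSucc) hof'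
        (fun s h1 h2 => hq s h1 (h2.trans (Nat.le_succ n)))
      have hEα := Eop_Omega v hv n (fun t => α t.castSucc)
      have hsα := suppW_Omega v n (fun t => α t.castSucc)
      rw [Omega_succ]
      by_cases h : α (Fin.last n) = true
      · rw [if_pos h, form_Phi1_Phi1]
        exact IH
      · rw [if_neg h, form_Phi2_Phi2 v hv _ hEα hsα]
        have hb : α (Fin.last n) = false := by
          revert h
          cases α (Fin.last n) <;> simp
        set w := wt (fun t => α t.castSucc) with hwdef
        have hw1 : 1 ≤ w := wt_init_pos hof hb
        have hwn : w ≤ n := wt_le _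
        have hq1 : qint v w ≠ 0 := by
          rw [show w = ((w.toNat : ℕ) : ℤ) by omega, qint_natCast]
          exact hq w.toNat (by omega) (by omega)
        have hq2 : qint v (w + 1) ≠ 0 := by
          rw [show w + 1 = (((w.toNat + 1 : ℕ)) : ℤ) by omega, qint_natCast]
          exact hq (w.toNat + 1) (by omega) (by omega)
        have hfac : qint v w + v ^ (w + 1) = v * qint v (w + 1) := by
          rw [qint_succ v hv, mul_add, mul_inv_cancel_left₀ hv, zpow_add_one₀ hv]
          ring
        rw [hfac]
        exact mul_ne_zero (mul_ne_zero hq1 (mul_ne_zero hv hq2)) IH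

lemma qintN_ne_of_qfact (v : k) {n : ℕ} (hqf : qfact v n ≠ 0) :
    ∀ s : ℕ, 1 ≤ s → s ≤ n → qintN v s ≠ 0 := by
  intro s h1 h2 h0
  apply hqf
  unfold qfact
  refine Finset.prod_eq_zero (i := s - 1) (Finset.mem_range.mpr (by omega)) ?_
  rw [show s - 1 + 1 = s by omega]
  exact h0

end S12

/-- the vectors `Ω(α)` are maximal; if `[n]! ≠ 0` they are
non-isotropic, pairwise orthogonal, and linearly independent. -/
theorem stmt_12 {k : Type*} [Field k] (v : k) (hv : v ≠ 0) (n : ℕ) :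
    (∀ α : Fin n → Bool, IsOneFactor α → Eop v n (Omega v n α) = 0) ∧
    (qfact v n ≠ 0 →
      (∀ α : Fin n → Bool, IsOneFactor α → form (Omega v n α) (Omega v n α) ≠ 0) ∧
      (∀ α β : Fin n → Bool, IsOneFactor α → IsOneFactor β → α ≠ β →
        form (Omega v n α) (Omega v n β) = 0) ∧
      LinearIndependent k
        (fun α : {α : Fin n → Bool // IsOneFactor α} => Omega v n α.1)) := by
  constructor
  · intro α _
    exact S12.Eop_Omega v hv n α
  · intro hqf
    have hq := S12.qintN_ne_of_qfact v hqf
    refine ⟨fun α h => S12.form_Omega_self_ne v hv n α h hq,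
      fun α β _ _ hne => S12.form_Omega_ne v hv n α β hne, ?_⟩
    letI : Fintype {α : Fin n → Bool // IsOneFactor α} := Fintype.ofFinite _
    rw [Fintype.linearIndependent_iff]
    intro g hg β
    have h0 : form (∑ α : {α : Fin n → Bool // IsOneFactor α}, g α • Omega v n α.1)
        (Omega v n β.1) = 0 := by
      rw [hg, S12.form_zero_left]
    rw [S12.form_sum_left] at h0
    have hsingle : ∀ α : {α : Fin n → Bool // IsOneFactor α}, α ∈ Finset.univ → α ≠ β →
        form (g α • Omega v n α.1) (Omega v n β.1) = 0 := by
      intro α _ hne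
      rw [S12.form_smul_left,
        S12.form_Omega_ne v hv n _ _ (fun hc => hne (Subtype.ext hc)), mul_zero]
    rw [Finset.sum_eq_single β hsingle (fun h => absurd (Finset.mem_univ β) h),
      S12.form_smul_left] at h0
    rcases mul_eq_zero.mp h0 with h | h
    · exact h
    · exact absurd h (S12.form_Omega_self_ne v hv n β.1 β.2 hq)
end
end
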